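/- arXiv:2311.09804 — 5 statements merged into one kernel-verified Lean document; each statement's English description precedes it below -/
import Mathlib

section
/- The expectation of the Jaccard index of any pair of distinct vertices in G(n,p) equals p/(2-p) for all n ≥ 2 and p ∈ (0,1). -/
open MeasureTheory ProbabilityTheory Filter
open scoped ENNReal

/-- The Erdős–Rényi random graph `G(n,p)`: each of the possible edges `{i,j}`, `i < j`,
is present independently with probability `p`. -/
noncomputable def gnp (n : ℕ) (p : ℝ≥0∞) (hp : p ≤ 1) :
    Measure ({e : Fin n × Fin n // e.1 < e.2} → Bool) :=
  Measure.pi fun _ => (PMF.bernoulli p.toNNReal (by simpa using ENNReal.toNNReal_mono ENNReal.one_ne_top hp)).toMeasure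

/-- The indicator `I_ij` that the edge `{i,j}` is present in the graph `ω`. -/
def eInd {n : ℕ} (ω : {e : Fin n × Fin n // e.1 < e.2} → Bool) (i j : Fin n) : ℕ :=
  if h : i < j then (if ω ⟨(i, j), h⟩ then 1 else 0)
  else if h' : j < i then (if ω ⟨(j, i), h'⟩ then 1 else 0) else 0

/-- `S_ij`, the number of common neighbors of vertices `i` and `j`. -/
def Sij {n : ℕ} (i j : Fin n) (ω : {e : Fin n × Fin n // e.1 < e.2} → Bool) : ℕ :=
  ∑ k ∈ Finset.univ \ {i, j}, eInd ω i k * eInd ω j k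

/-- `T_ij`, the number of vertices `k ∉ {i,j}` adjacent to at least one of `i`, `j`. -/
def Tij {n : ℕ} (i j : Fin n) (ω : {e : Fin n × Fin n // e.1 < e.2} → Bool) : ℕ :=
  ∑ k ∈ Finset.univ \ {i, j}, max (eInd ω i k) (eInd ω j k)

/-- The Jaccard index `J_ij = S_ij / T_ij` of vertices `i` and `j`, with the
convention `J_ij = p/(2-p)` when `T_ij = 0`. -/
noncomputable def jac {n : ℕ} (p : ℝ) (i j : Fin n)
    (ω : {e : Fin n × Fin n // e.1 < e.2} → Bool) : ℝ :=
  if Tij i j ω = 0 then p / (2 - p) else (Sij i j ω : ℝ) / (Tij i j ω : ℝ)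

namespace JacAux

variable {n : ℕ}

abbrev Edg (n : ℕ) := {e : Fin n × Fin n // e.1 < e.2}

def wp (p : ℝ) (b : Bool) : ℝ := bif b then p else 1 - p

def W (p : ℝ) (ω : Edg n → Bool) : ℝ := ∏ e, wp p (ω e)

def edg (i k : Fin n) (h : i ≠ k) : Edg n :=
  if h' : i < k then ⟨(i, k), h'⟩ else ⟨(k, i), lt_of_le_of_ne (not_lt.mp h') (Ne.symm h)⟩

lemma eInd_eq (ω : Edg n → Bool) {i k : Fin n} (h : i ≠ k) :
    eInd ω i k = if ω (edg i k h) then 1 else 0 := by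
  unfold eInd edg
  rcases lt_or_gt_of_ne h with h' | h'
  · simp [h']
  · simp [h', not_lt.mpr h'.le, h.symm, (Fin.lt_iff_val_lt_val.mp h').ne']

lemma edg_cases {i k a b : Fin n} (h : i ≠ k) (h' : a ≠ b)
    (he : edg i k h = edg a b h') : (i = a ∧ k = b) ∨ (i = b ∧ k = a) := by
  unfold edg at he
  split_ifs at he <;>
    · simp only [Subtype.mk.injEq, Prod.mk.injEq] at he
      tauto

lemma integral_eq_sum (p : ℝ) (hp : p ∈ Set.Ioo (0:ℝ) 1)
    (f : (Edg n → Bool) → ℝ) :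
    ∫ ω, f ω ∂(gnp n (ENNReal.ofReal p) (ENNReal.ofReal_le_one.mpr hp.2.le))
      = ∑ ω : Edg n → Bool, W p ω * f ω := by
  have hle : ENNReal.ofReal p ≤ 1 := ENNReal.ofReal_le_one.mpr hp.2.le
  have hμ : ∀ ω : Edg n → Bool,
      (gnp n (ENNReal.ofReal p) hle) {ω} = ∏ e, (PMF.bernoulli (ENNReal.ofReal p).toNNReal
        (by simpa using ENNReal.toNNReal_mono ENNReal.one_ne_top hle)) (ω e) := by
    intro ω
    rw [gnp, ← Set.univ_pi_singleton ω, Measure.pi_pi]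
    exact Finset.prod_congr rfl fun e _ =>
      PMF.toMeasure_apply_singleton _ _ (measurableSet_singleton _)
  have : IsProbabilityMeasure (gnp n (ENNReal.ofReal p) hle) := by
    unfold gnp; infer_instance
  rw [integral_fintype (Integrable.of_finite)]
  refine Finset.sum_congr rfl fun ω _ => ?_
  rw [measureReal_def, hμ, smul_eq_mul, ENNReal.toReal_prod]
  congr 1
  refine Finset.prod_congr rfl fun e _ => ?_
  cases h : ω e
  · simp only [wp, cond_false]
    change (((1 - (ENNReal.ofReal p).toNNReal : NNReal) : ℝ≥0∞)).toReal = 1 - p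
    rw [ENNReal.coe_toReal, NNReal.coe_sub (by simpa using ENNReal.toNNReal_mono ENNReal.one_ne_top hle),
      NNReal.coe_one, ENNReal.coe_toNNReal_eq_toReal, ENNReal.toReal_ofReal hp.1.le]
  · simp only [wp, cond_true]
    change (((ENNReal.ofReal p).toNNReal : ℝ≥0∞)).toReal = p
    rw [ENNReal.coe_toNNReal ENNReal.ofReal_ne_top]
    exact ENNReal.toReal_ofReal hp.1.le

lemma sum_W_eq_one (p : ℝ) (hp : p ∈ Set.Ioo (0:ℝ) 1) :
    ∑ ω : Edg n → Bool, W (n := n) p ω = 1 := by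
  have h := integral_eq_sum (n := n) p hp (fun _ => 1)
  have hle : ENNReal.ofReal p ≤ 1 := ENNReal.ofReal_le_one.mpr hp.2.le
  have : IsProbabilityMeasure (gnp n (ENNReal.ofReal p) hle) := by
    unfold gnp; infer_instance
  simpa using h.symm

lemma W_update (p : ℝ) (ω : Edg n → Bool) (e : Edg n) (b : Bool) :
    W p (Function.update ω e b) * wp p (ω e) = W p ω * wp p b := by
  unfold W
  have hf : (fun x => wp p (Function.update ω e b x))
      = Function.update (fun x => wp p (ω x)) e (wp p b) := by
    funext x
    by_cases hx : x = e
    · subst hx; simp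
    · simp [Function.update_of_ne hx]
  calc (∏ x, wp p (Function.update ω e b x)) * wp p (ω e)
      = (∏ x, Function.update (fun x => wp p (ω x)) e (wp p b) x) * wp p (ω e) := by rw [hf]
    _ = _ := by
        rw [Finset.prod_update_of_mem (Finset.mem_univ e),
            ← Finset.mul_prod_erase Finset.univ (fun x => wp p (ω x)) (Finset.mem_univ e),
            Finset.sdiff_singleton_eq_erase]
        ring

/-- T is unchanged by updating edge {j,k} when edge {i,k} is present. -/
lemma T_update_right {i j k : Fin n} (hij : i ≠ j) (hik : i ≠ k) (hjk : j ≠ k)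
    (ω : Edg n → Bool) (h1 : ω (edg i k hik) = true) (b : Bool) :
    Tij i j (Function.update ω (edg j k hjk) b) = Tij i j ω := by
  unfold Tij
  refine Finset.sum_congr rfl fun k' hk' => ?_
  rw [Finset.mem_sdiff, Finset.mem_insert, Finset.mem_singleton] at hk'
  have hik' : i ≠ k' := fun h => hk'.2 (Or.inl h.symm)
  have hjk' : j ≠ k' := fun h => hk'.2 (Or.inr h.symm)
  by_cases hk : k' = k
  · subst hk
    rw [eInd_eq _ hik', eInd_eq _ hjk', eInd_eq _ hik', eInd_eq _ hjk']
    have he : edg j k' hjk' ≠ edg i k' hik' := by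
      intro h
      rcases edg_cases _ _ h with ⟨ha, hb⟩ | ⟨ha, hb⟩ <;> simp_all
    rw [Function.update_of_ne (Ne.symm he), Function.update_self, h1]
    cases b <;> simp <;> split <;> simp
  · have he1 : edg j k hjk ≠ edg i k' hik' := by
      intro h
      rcases edg_cases _ _ h with ⟨ha, hb⟩ | ⟨ha, hb⟩ <;> simp_all
    have he2 : edg j k hjk ≠ edg j k' hjk' := by
      intro h
      rcases edg_cases _ _ h with ⟨ha, hb⟩ | ⟨ha, hb⟩ <;> simp_all
    rw [eInd_eq _ hik', eInd_eq _ hjk', eInd_eq _ hik', eInd_eq _ hjk',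
        Function.update_of_ne (Ne.symm he1), Function.update_of_ne (Ne.symm he2)]

/-- T is unchanged by updating edge {i,k} when edge {j,k} is present. -/
lemma T_update_left {i j k : Fin n} (hij : i ≠ j) (hik : i ≠ k) (hjk : j ≠ k)
    (ω : Edg n → Bool) (h2 : ω (edg j k hjk) = true) (b : Bool) :
    Tij i j (Function.update ω (edg i k hik) b) = Tij i j ω := by
  unfold Tij
  refine Finset.sum_congr rfl fun k' hk' => ?_
  rw [Finset.mem_sdiff, Finset.mem_insert, Finset.mem_singleton] at hk'
  have hik' : i ≠ k' := fun h => hk'.2 (Or.inl h.symm)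
  have hjk' : j ≠ k' := fun h => hk'.2 (Or.inr h.symm)
  by_cases hk : k' = k
  · subst hk
    rw [eInd_eq _ hik', eInd_eq _ hjk', eInd_eq _ hik', eInd_eq _ hjk']
    have he : edg i k' hik' ≠ edg j k' hjk' := by
      intro h
      rcases edg_cases _ _ h with ⟨ha, hb⟩ | ⟨ha, hb⟩ <;> simp_all
    rw [Function.update_of_ne (Ne.symm he), Function.update_self, h2]
    cases b <;> simp <;> split <;> simp
  · have he1 : edg i k hik ≠ edg i k' hik' := by
      intro h
      rcases edg_cases _ _ h with ⟨ha, hb⟩ | ⟨ha, hb⟩ <;> simp_all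
    have he2 : edg i k hik ≠ edg j k' hjk' := by
      intro h
      rcases edg_cases _ _ h with ⟨ha, hb⟩ | ⟨ha, hb⟩ <;> simp_all
    rw [eInd_eq _ hik', eInd_eq _ hjk', eInd_eq _ hik', eInd_eq _ hjk',
        Function.update_of_ne (Ne.symm he1), Function.update_of_ne (Ne.symm he2)]

/-- The key per-vertex identity. -/
lemma key (p : ℝ) (hp : p ∈ Set.Ioo (0:ℝ) 1) {i j k : Fin n}
    (hij : i ≠ j) (hik : i ≠ k) (hjk : j ≠ k) :
    ∑ ω : Edg n → Bool, W p ω * (eInd ω i k * eInd ω j k : ℝ) / (Tij i j ω : ℝ)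
      = (p / (2 - p)) *
        ∑ ω : Edg n → Bool, W p ω * (max (eInd ω i k) (eInd ω j k) : ℝ) / (Tij i j ω : ℝ) := by
  set e1 := edg i k hik with he1def
  set e2 := edg j k hjk with he2def
  have he12 : e1 ≠ e2 := by
    intro h
    rcases edg_cases _ _ h with ⟨ha, hb⟩ | ⟨ha, hb⟩ <;> simp_all
  -- abbreviations for the three pattern sums
  set Φ : (Edg n → Bool) → ℝ := fun ω => W p ω / (Tij i j ω : ℝ) with hΦ
  have hptw1 : ∀ ω : Edg n → Bool,
      W p ω * (eInd ω i k * eInd ω j k : ℝ) / (Tij i j ω : ℝ)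
        = if ω e1 = true ∧ ω e2 = true then Φ ω else 0 := by
    intro ω
    rw [eInd_eq ω hik, eInd_eq ω hjk]
    cases h1 : ω e1 <;> cases h2 : ω e2 <;> simp [hΦ, div_eq_mul_inv]
  have hptw2 : ∀ ω : Edg n → Bool,
      W p ω * (max (eInd ω i k) (eInd ω j k) : ℝ) / (Tij i j ω : ℝ)
        = (if ω e1 = true ∧ ω e2 = true then Φ ω else 0)
          + (if ω e1 = true ∧ ω e2 = false then Φ ω else 0)
          + (if ω e1 = false ∧ ω e2 = true then Φ ω else 0) := by
    intro ω
    rw [eInd_eq ω hik, eInd_eq ω hjk]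
    cases h1 : ω e1 <;> cases h2 : ω e2 <;> simp [hΦ, div_eq_mul_inv]
  have hp2 : (2 : ℝ) - p ≠ 0 := by linarith [hp.2]
  have hp0 : p ≠ 0 := ne_of_gt hp.1
  -- the two transfer identities
  have htf : (∑ ω : Edg n → Bool, if ω e1 = true ∧ ω e2 = false then Φ ω else 0) * p
      = (∑ ω : Edg n → Bool, if ω e1 = true ∧ ω e2 = true then Φ ω else 0) * (1 - p) := by
    have hσ : Function.Involutive (fun ω : Edg n → Bool => Function.update ω e2 (!ω e2)) := by
      intro ω
      simp [Function.update_idem, Function.update_self, Function.update_eq_self]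
    rw [Finset.sum_mul, Finset.sum_mul,
        ← hσ.bijective.sum_comp (fun ω => (if ω e1 = true ∧ ω e2 = false then Φ ω else 0) * p)]
    refine Finset.sum_congr rfl fun ω _ => ?_
    simp only [Function.update_of_ne he12, Function.update_self]
    cases h1 : ω e1 <;> cases h2 : ω e2 <;> simp [h1, h2]
    -- remaining: case h1 = true, h2 = true
    have hT := T_update_right hij hik hjk ω (by rw [← he1def, h1]) false
    have hW := W_update p ω e2 false
    rw [h2] at hW
    simp only [wp, cond_true, cond_false] at hW
    rw [hΦ]
    simp only
    rw [hT]
    field_simp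
    linarith [congrArg (fun x => x / (Tij i j ω : ℝ)) hW]
  have hft : (∑ ω : Edg n → Bool, if ω e1 = false ∧ ω e2 = true then Φ ω else 0) * p
      = (∑ ω : Edg n → Bool, if ω e1 = true ∧ ω e2 = true then Φ ω else 0) * (1 - p) := by
    have hσ : Function.Involutive (fun ω : Edg n → Bool => Function.update ω e1 (!ω e1)) := by
      intro ω
      simp [Function.update_idem, Function.update_self, Function.update_eq_self]
    rw [Finset.sum_mul, Finset.sum_mul,
        ← hσ.bijective.sum_comp (fun ω => (if ω e1 = false ∧ ω e2 = true then Φ ω else 0) * p)]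
    refine Finset.sum_congr rfl fun ω _ => ?_
    simp only [Function.update_of_ne (Ne.symm he12), Function.update_self]
    cases h1 : ω e1 <;> cases h2 : ω e2 <;> simp [h1, h2]
    have hT := T_update_left hij hik hjk ω (by rw [← he2def, h2]) false
    have hW := W_update p ω e1 false
    rw [h1] at hW
    simp only [wp, cond_true, cond_false] at hW
    rw [hΦ]
    simp only
    rw [hT]
    field_simp
    linarith [congrArg (fun x => x / (Tij i j ω : ℝ)) hW]
  rw [Finset.sum_congr rfl fun ω _ => hptw1 ω,
      Finset.sum_congr rfl fun ω _ => hptw2 ω]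
  rw [Finset.sum_add_distrib, Finset.sum_add_distrib]
  set A := ∑ ω : Edg n → Bool, if ω e1 = true ∧ ω e2 = true then Φ ω else 0
  set B := ∑ ω : Edg n → Bool, if ω e1 = true ∧ ω e2 = false then Φ ω else 0
  set C := ∑ ω : Edg n → Bool, if ω e1 = false ∧ ω e2 = true then Φ ω else 0
  have hB : B = A * (1 - p) / p := by field_simp; linarith [htf]
  have hC : C = A * (1 - p) / p := by field_simp; linarith [hft]
  rw [hB, hC]
  field_simp
  ring

end JacAux

/-- The expectation of the Jaccard index of any pair of distinct vertices in `G(n,p)`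
equals `p/(2-p)`, for all `n ≥ 2` and `p ∈ (0,1)`. -/
theorem expectation_jaccard (n : ℕ) (hn : 2 ≤ n) (p : ℝ) (hp : p ∈ Set.Ioo (0 : ℝ) 1)
    (i j : Fin n) (hij : i ≠ j) :
    ∫ ω, jac p i j ω ∂(gnp n (ENNReal.ofReal p) (ENNReal.ofReal_le_one.mpr hp.2.le))
      = p / (2 - p) := by
  classical
  open JacAux in
  rw [JacAux.integral_eq_sum p hp]
  set q := p / (2 - p) with hq
  have hdecomp : ∀ ω : JacAux.Edg n → Bool,
      JacAux.W p ω * jac p i j ω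
        = q * (if Tij i j ω = 0 then JacAux.W p ω else 0)
          + JacAux.W p ω * ((Sij i j ω : ℝ) / (Tij i j ω : ℝ)) := by
    intro ω
    by_cases h : Tij i j ω = 0
    · simp [jac, h, hq]; ring
    · simp [jac, h]
  rw [Finset.sum_congr rfl fun ω _ => hdecomp ω, Finset.sum_add_distrib]
  have hS : ∀ ω : JacAux.Edg n → Bool,
      JacAux.W p ω * ((Sij i j ω : ℝ) / (Tij i j ω : ℝ))
        = ∑ k ∈ Finset.univ \ {i, j},
            JacAux.W p ω * (eInd ω i k * eInd ω j k : ℝ) / (Tij i j ω : ℝ) := by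
    intro ω
    rw [Sij]
    push_cast
    rw [Finset.sum_div, Finset.mul_sum]
    refine Finset.sum_congr rfl fun k _ => ?_
    ring
  rw [Finset.sum_congr rfl fun ω _ => hS ω, Finset.sum_comm]
  have hkey : ∀ k ∈ Finset.univ \ {i, j},
      (∑ ω : JacAux.Edg n → Bool,
        JacAux.W p ω * (eInd ω i k * eInd ω j k : ℝ) / (Tij i j ω : ℝ))
      = q * ∑ ω : JacAux.Edg n → Bool,
        JacAux.W p ω * (max (eInd ω i k) (eInd ω j k) : ℝ) / (Tij i j ω : ℝ) := by
    intro k hk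
    rw [Finset.mem_sdiff, Finset.mem_insert, Finset.mem_singleton] at hk
    have hik : i ≠ k := fun h => hk.2 (Or.inl h.symm)
    have hjk : j ≠ k := fun h => hk.2 (Or.inr h.symm)
    exact JacAux.key p hp hij hik hjk
  rw [Finset.sum_congr rfl hkey]
  rw [← Finset.mul_sum]
  rw [← Finset.mul_sum]
  rw [Finset.sum_comm]
  have hT : ∀ ω : JacAux.Edg n → Bool,
      (∑ k ∈ Finset.univ \ {i, j},
        JacAux.W p ω * (max (eInd ω i k) (eInd ω j k) : ℝ) / (Tij i j ω : ℝ))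
      = (if Tij i j ω = 0 then 0 else JacAux.W p ω) := by
    intro ω
    have : (∑ k ∈ Finset.univ \ {i, j},
        JacAux.W p ω * (max (eInd ω i k) (eInd ω j k) : ℝ) / (Tij i j ω : ℝ))
        = JacAux.W p ω * (Tij i j ω : ℝ) / (Tij i j ω : ℝ) := by
      rw [Tij]
      push_cast
      rw [Finset.mul_sum, Finset.sum_div]
    rw [this]
    by_cases h : Tij i j ω = 0
    · simp [h]
    · have : (Tij i j ω : ℝ) ≠ 0 := Nat.cast_ne_zero.mpr h
      rw [if_neg h, mul_div_assoc, div_self this, mul_one]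
  rw [Finset.sum_congr rfl fun ω _ => hT ω, ← mul_add, ← Finset.sum_add_distrib]
  have : ∀ ω : JacAux.Edg n → Bool,
      ((if Tij i j ω = 0 then JacAux.W p ω else 0)
        + (if Tij i j ω = 0 then 0 else JacAux.W p ω)) = JacAux.W p ω := by
    intro ω; split <;> simp
  rw [Finset.sum_congr rfl fun ω _ => this ω, JacAux.sum_W_eq_one p hp, mul_one]
end

section
/- The variance of the Jaccard index J_ij in G(n,p) satisfies Var[J_ij] = (2p(1-p)/(2-p)²) · Σ_{m=1}^{n-2} (1/m) P(T_ij = m), where T_ij ~ Bin(n-2, p(2-p)). -/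
set_option maxHeartbeats 1000000


open MeasureTheory ProbabilityTheory Filter
open scoped ENNReal

namespace JacV

variable {n : ℕ}

abbrev Edg (n : ℕ) := {e : Fin n × Fin n // e.1 < e.2}

abbrev Cfg (n : ℕ) := Edg n → Bool

/-- The edge between two distinct vertices. -/
def edge (i k : Fin n) (h : i ≠ k) : Edg n :=
  if h' : i < k then ⟨(i, k), h'⟩ else ⟨(k, i), (h.lt_or_gt.resolve_left h')⟩

lemma eInd_eq (ω : Cfg n) (i k : Fin n) (h : i ≠ k) :
    eInd ω i k = if ω (edge i k h) then 1 else 0 := by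
  unfold eInd edge
  rcases h.lt_or_gt with h1 | h1
  · rw [dif_pos h1, dif_pos h1]
  · rw [dif_neg (not_lt.2 h1.le), dif_neg (not_lt.2 h1.le), dif_pos h1]

lemma edge_eq_iff {i k i' k' : Fin n} (h : i ≠ k) (h' : i' ≠ k') :
    edge i k h = edge i' k' h' ↔ (i = i' ∧ k = k') ∨ (i = k' ∧ k = i') := by
  unfold edge
  have hlt := h.lt_or_gt
  have hlt' := h'.lt_or_gt
  split_ifs with a b b <;>
    simp only [Subtype.mk.injEq, Prod.mk.injEq] <;>
    constructor <;> rintro (⟨rfl, rfl⟩ | ⟨rfl, rfl⟩) <;> simp_all <;> omega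

lemma edge_ne {i k i' k' : Fin n} (h : i ≠ k) (h' : i' ≠ k')
    (hne : ¬((i = i' ∧ k = k') ∨ (i = k' ∧ k = i'))) : edge i k h ≠ edge i' k' h' := by
  rw [Ne, edge_eq_iff]; exact hne

/-- Real weight of one bit. -/
def bb (p : ℝ) (x : Bool) : ℝ := if x then p else 1 - p

/-- Real weight of a configuration. -/
def w (p : ℝ) (ω : Cfg n) : ℝ := ∏ e, bb p (ω e)

/-- Updating a configuration on a pair of edges. -/
def upd2 (ω : Cfg n) (e₁ e₂ : Edg n) (s : Bool × Bool) : Cfg n :=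
  Function.update (Function.update ω e₁ s.1) e₂ s.2

lemma upd2_apply₁ {e₁ e₂ : Edg n} (hne : e₁ ≠ e₂) (ω : Cfg n) (s : Bool × Bool) :
    upd2 ω e₁ e₂ s e₁ = s.1 := by
  simp [upd2, Function.update_of_ne hne]

lemma upd2_apply₂ (e₁ e₂ : Edg n) (ω : Cfg n) (s : Bool × Bool) :
    upd2 ω e₁ e₂ s e₂ = s.2 := by
  simp [upd2]

lemma upd2_apply_other {e₁ e₂ e : Edg n} (h1 : e ≠ e₁) (h2 : e ≠ e₂) (ω : Cfg n)
    (s : Bool × Bool) : upd2 ω e₁ e₂ s e = ω e := by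
  simp [upd2, Function.update_of_ne h1, Function.update_of_ne h2]

lemma upd2_upd2 {e₁ e₂ : Edg n} (hne : e₁ ≠ e₂) (ω : Cfg n) (t : Bool × Bool) :
    upd2 (upd2 ω e₁ e₂ t) e₁ e₂ (ω e₁, ω e₂) = ω := by
  funext e
  by_cases h2 : e = e₂
  · subst h2; simp [upd2]
  · by_cases h1 : e = e₁
    · subst h1
      simp only [upd2, Function.update_of_ne h2, Function.update_self]
    · rw [upd2_apply_other h1 h2, upd2_apply_other h1 h2]

lemma upd2_self {e₁ e₂ : Edg n} (ω : Cfg n) :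
    upd2 ω e₁ e₂ (ω e₁, ω e₂) = ω := by
  funext e
  by_cases h2 : e = e₂
  · subst h2; simp [upd2]
  · by_cases h1 : e = e₁
    · subst h1
      simp only [upd2, Function.update_of_ne h2, Function.update_self]
    · exact upd2_apply_other h1 h2 ω _

lemma w_split (p : ℝ) {e₁ e₂ : Edg n} (hne : e₁ ≠ e₂) (f : Cfg n) :
    w p f = bb p (f e₁) * (bb p (f e₂) *
      ∏ e ∈ (Finset.univ \ {e₁}) \ {e₂}, bb p (f e)) := by
  rw [w, Finset.prod_eq_mul_prod_sdiff_singleton_of_mem (Finset.mem_univ e₁) (fun e => bb p (f e)),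
    Finset.prod_eq_mul_prod_sdiff_singleton_of_mem
      (by simp [Finset.mem_sdiff, hne.symm] : e₂ ∈ Finset.univ \ {e₁}) (fun e => bb p (f e))]

lemma w_upd2 (p : ℝ) {e₁ e₂ : Edg n} (hne : e₁ ≠ e₂) (ω : Cfg n) (s : Bool × Bool) :
    w p (upd2 ω e₁ e₂ s) * (bb p (ω e₁) * bb p (ω e₂))
      = w p ω * (bb p s.1 * bb p s.2) := by
  rw [w_split p hne (upd2 ω e₁ e₂ s), w_split p hne ω]
  have hrest : ∏ e ∈ (Finset.univ \ {e₁}) \ {e₂}, bb p (upd2 ω e₁ e₂ s e)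
      = ∏ e ∈ (Finset.univ \ {e₁}) \ {e₂}, bb p (ω e) := by
    refine Finset.prod_congr rfl fun e he => ?_
    simp only [Finset.mem_sdiff, Finset.mem_singleton] at he
    rw [upd2_apply_other he.1.2 he.2]
  rw [hrest, upd2_apply₁ hne, upd2_apply₂]
  ring

lemma swap (p : ℝ) {e₁ e₂ : Edg n} (hne : e₁ ≠ e₂) (s s' : Bool × Bool)
    (g : Cfg n → ℝ) (hg : ∀ ω, g (upd2 ω e₁ e₂ s) = g (upd2 ω e₁ e₂ s')) :
    (bb p s'.1 * bb p s'.2) *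
        ∑ ω ∈ Finset.univ.filter (fun ω : Cfg n => ω e₁ = s.1 ∧ ω e₂ = s.2), (w p ω * g ω)
      = (bb p s.1 * bb p s.2) *
        ∑ ω ∈ Finset.univ.filter (fun ω : Cfg n => ω e₁ = s'.1 ∧ ω e₂ = s'.2), (w p ω * g ω) := by
  rw [Finset.mul_sum, Finset.mul_sum]
  refine Finset.sum_nbij' (i := fun ω => upd2 ω e₁ e₂ s') (j := fun ω => upd2 ω e₁ e₂ s)
    ?_ ?_ ?_ ?_ ?_
  · intro ω hω
    simp only [Finset.mem_filter, Finset.mem_univ, true_and]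
    exact ⟨upd2_apply₁ hne ω s', upd2_apply₂ e₁ e₂ ω s'⟩
  · intro ω hω
    simp only [Finset.mem_filter, Finset.mem_univ, true_and]
    exact ⟨upd2_apply₁ hne ω s, upd2_apply₂ e₁ e₂ ω s⟩
  · intro ω hω
    simp only [Finset.mem_filter, Finset.mem_univ, true_and] at hω
    have : s = (ω e₁, ω e₂) := by rw [hω.1, hω.2]
    rw [this]
    exact upd2_upd2 hne ω s'
  · intro ω hω
    simp only [Finset.mem_filter, Finset.mem_univ, true_and] at hω
    have : s' = (ω e₁, ω e₂) := by rw [hω.1, hω.2]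
    rw [this]
    exact upd2_upd2 hne ω s
  · intro ω hω
    simp only [Finset.mem_filter, Finset.mem_univ, true_and] at hω
    have hgs : g (upd2 ω e₁ e₂ s') = g ω := by
      rw [← hg ω]
      have : s = (ω e₁, ω e₂) := by rw [hω.1, hω.2]
      rw [this, upd2_self]
    have hw : w p (upd2 ω e₁ e₂ s') * (bb p s.1 * bb p s.2)
        = w p ω * (bb p s'.1 * bb p s'.2) := by
      have := w_upd2 p hne ω s'
      rwa [hω.1, hω.2] at this
    rw [hgs]
    linear_combination (-(g ω)) * hw

/-- The key "resampling" identity for a pair of edges. -/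
lemma key (p : ℝ) (hp0 : 0 < p) {e₁ e₂ : Edg n} (hne : e₁ ≠ e₂) (g : Cfg n → ℝ)
    (hg : ∀ (ω : Cfg n) (s s' : Bool × Bool), s ≠ (false, false) → s' ≠ (false, false) →
      g (upd2 ω e₁ e₂ s) = g (upd2 ω e₁ e₂ s')) :
    (2 - p) * ∑ ω : Cfg n, w p ω * g ω * (if ω e₁ = true ∧ ω e₂ = true then 1 else 0)
      = p * ∑ ω : Cfg n, w p ω * g ω * (if ω e₁ = true ∨ ω e₂ = true then 1 else 0) := by
  classical
  have h1 : (p * (1 - p)) *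
        (∑ ω ∈ Finset.univ.filter (fun ω : Cfg n => ω e₁ = true ∧ ω e₂ = true), (w p ω * g ω))
      = (p * p) *
        (∑ ω ∈ Finset.univ.filter (fun ω : Cfg n => ω e₁ = true ∧ ω e₂ = false), (w p ω * g ω)) := by
    have := swap p hne (true, true) (true, false) g (fun ω => hg ω _ _ (by simp) (by simp))
    simpa [bb] using this
  have h2 : ((1 - p) * p) *
        (∑ ω ∈ Finset.univ.filter (fun ω : Cfg n => ω e₁ = true ∧ ω e₂ = true), (w p ω * g ω))
      = (p * p) *
        (∑ ω ∈ Finset.univ.filter (fun ω : Cfg n => ω e₁ = false ∧ ω e₂ = true), (w p ω * g ω)) := by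
    have := swap p hne (true, true) (false, true) g (fun ω => hg ω _ _ (by simp) (by simp))
    simpa [bb] using this
  have hand : ∑ ω : Cfg n, w p ω * g ω * (if ω e₁ = true ∧ ω e₂ = true then 1 else 0)
      = ∑ ω ∈ Finset.univ.filter (fun ω : Cfg n => ω e₁ = true ∧ ω e₂ = true), (w p ω * g ω) := by
    rw [Finset.sum_filter]
    exact Finset.sum_congr rfl fun ω _ => by
      by_cases h : ω e₁ = true ∧ ω e₂ = true <;> simp [h]
  have hor : ∑ ω : Cfg n, w p ω * g ω * (if ω e₁ = true ∨ ω e₂ = true then 1 else 0)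
      = (∑ ω ∈ Finset.univ.filter (fun ω : Cfg n => ω e₁ = true ∧ ω e₂ = true), (w p ω * g ω))
        + (∑ ω ∈ Finset.univ.filter (fun ω : Cfg n => ω e₁ = true ∧ ω e₂ = false), (w p ω * g ω))
        + (∑ ω ∈ Finset.univ.filter (fun ω : Cfg n => ω e₁ = false ∧ ω e₂ = true), (w p ω * g ω)) := by
    simp only [Finset.sum_filter]
    rw [← Finset.sum_add_distrib, ← Finset.sum_add_distrib]
    refine Finset.sum_congr rfl fun ω _ => ?_
    cases hh1 : ω e₁ <;> cases hh2 : ω e₂ <;> simp [hh1, hh2]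
  rw [hand, hor]
  have c1 : p * ((1 - p) *
        (∑ ω ∈ Finset.univ.filter (fun ω : Cfg n => ω e₁ = true ∧ ω e₂ = true), (w p ω * g ω)))
      = p * (p *
        (∑ ω ∈ Finset.univ.filter (fun ω : Cfg n => ω e₁ = true ∧ ω e₂ = false), (w p ω * g ω))) := by
    linear_combination h1
  have c2 : p * ((1 - p) *
        (∑ ω ∈ Finset.univ.filter (fun ω : Cfg n => ω e₁ = true ∧ ω e₂ = true), (w p ω * g ω)))
      = p * (p *
        (∑ ω ∈ Finset.univ.filter (fun ω : Cfg n => ω e₁ = false ∧ ω e₂ = true), (w p ω * g ω))) := by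
    linear_combination h2
  have c1' := mul_left_cancel₀ hp0.ne' c1
  have c2' := mul_left_cancel₀ hp0.ne' c2
  linear_combination c1' + c2'


section Graph

variable {i j l l' : Fin n}

/-- Real indicator that `l` is a common neighbour of `i` and `j`. -/
def Vr (i j l : Fin n) (ω : Cfg n) : ℝ := ((eInd ω i l * eInd ω j l : ℕ) : ℝ)

/-- Real indicator that `l` is a neighbour of `i` or `j`. -/
def Ur (i j l : Fin n) (ω : Cfg n) : ℝ := ((max (eInd ω i l) (eInd ω j l) : ℕ) : ℝ)

/-- Real indicator that `Tij = m`. -/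
def Im (i j : Fin n) (m : ℕ) (ω : Cfg n) : ℝ := if Tij i j ω = m then 1 else 0

lemma Vr_eq (hil : i ≠ l) (hjl : j ≠ l) (ω : Cfg n) :
    Vr i j l ω = if ω (edge i l hil) = true ∧ ω (edge j l hjl) = true then 1 else 0 := by
  unfold Vr
  rw [eInd_eq ω i l hil, eInd_eq ω j l hjl]
  cases h1 : ω (edge i l hil) <;> cases h2 : ω (edge j l hjl) <;> simp [h1, h2]

lemma Ur_eq (hil : i ≠ l) (hjl : j ≠ l) (ω : Cfg n) :
    Ur i j l ω = if ω (edge i l hil) = true ∨ ω (edge j l hjl) = true then 1 else 0 := by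
  unfold Ur
  rw [eInd_eq ω i l hil, eInd_eq ω j l hjl]
  cases h1 : ω (edge i l hil) <;> cases h2 : ω (edge j l hjl) <;> simp [h1, h2]

lemma Vr_mul_self (hil : i ≠ l) (hjl : j ≠ l) (ω : Cfg n) :
    Vr i j l ω * Vr i j l ω = Vr i j l ω := by
  rw [Vr_eq hil hjl]
  by_cases h : ω (edge i l hil) = true ∧ ω (edge j l hjl) = true <;> simp [h]

lemma Ur_mul_self (hil : i ≠ l) (hjl : j ≠ l) (ω : Cfg n) :
    Ur i j l ω * Ur i j l ω = Ur i j l ω := by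
  rw [Ur_eq hil hjl]
  by_cases h : ω (edge i l hil) = true ∨ ω (edge j l hjl) = true <;> simp [h]

lemma Scast (i j : Fin n) (ω : Cfg n) :
    ((Sij i j ω : ℕ) : ℝ) = ∑ l ∈ Finset.univ \ {i, j}, Vr i j l ω := by
  unfold Sij Vr; exact Nat.cast_sum _ _

lemma Tcast (i j : Fin n) (ω : Cfg n) :
    ((Tij i j ω : ℕ) : ℝ) = ∑ l ∈ Finset.univ \ {i, j}, Ur i j l ω := by
  unfold Tij Ur; exact Nat.cast_sum _ _

lemma memK (hl : l ∈ Finset.univ \ ({i, j} : Finset (Fin n))) : i ≠ l ∧ j ≠ l := by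
  simp only [Finset.mem_sdiff, Finset.mem_univ, true_and, Finset.mem_insert,
    Finset.mem_singleton, not_or] at hl
  exact ⟨fun h => hl.1 h.symm, fun h => hl.2 h.symm⟩

lemma edge_pair_ne (hij : i ≠ j) (hil : i ≠ l) (hjl : j ≠ l) :
    edge i l hil ≠ edge j l hjl :=
  edge_ne _ _ (by rintro (⟨h, -⟩ | ⟨h, -⟩); exacts [hij h, hil h])

lemma eInd_upd2_at₁ (hij : i ≠ j) (hil : i ≠ l) (hjl : j ≠ l) (ω : Cfg n) (s : Bool × Bool) :
    eInd (upd2 ω (edge i l hil) (edge j l hjl) s) i l = if s.1 then 1 else 0 := by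
  rw [eInd_eq _ i l hil, upd2_apply₁ (edge_pair_ne hij hil hjl)]

lemma eInd_upd2_at₂ (hij : i ≠ j) (hil : i ≠ l) (hjl : j ≠ l) (ω : Cfg n) (s : Bool × Bool) :
    eInd (upd2 ω (edge i l hil) (edge j l hjl) s) j l = if s.2 then 1 else 0 := by
  rw [eInd_eq _ j l hjl, upd2_apply₂]

lemma eInd_upd2_other₁ (hij : i ≠ j) (hil : i ≠ l) (hjl : j ≠ l) (hil' : i ≠ l')
    (hll : l' ≠ l) (ω : Cfg n) (s : Bool × Bool) :
    eInd (upd2 ω (edge i l hil) (edge j l hjl) s) i l' = eInd ω i l' := by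
  rw [eInd_eq _ i l' hil', eInd_eq ω i l' hil']
  rw [upd2_apply_other
    (edge_ne _ _ (by rintro (⟨-, h⟩ | ⟨h, -⟩); exacts [hll h, hil h]))
    (edge_ne _ _ (by rintro (⟨h, -⟩ | ⟨h, -⟩); exacts [hij h, hil h]))]

lemma eInd_upd2_other₂ (hij : i ≠ j) (hil : i ≠ l) (hjl : j ≠ l) (hjl' : j ≠ l')
    (hll : l' ≠ l) (ω : Cfg n) (s : Bool × Bool) :
    eInd (upd2 ω (edge i l hil) (edge j l hjl) s) j l' = eInd ω j l' := by
  rw [eInd_eq _ j l' hjl', eInd_eq ω j l' hjl']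
  rw [upd2_apply_other
    (edge_ne _ _ (by rintro (⟨h, -⟩ | ⟨h, -⟩); exacts [hij h.symm, hjl h]))
    (edge_ne _ _ (by rintro (⟨-, h⟩ | ⟨h, -⟩); exacts [hll h, hjl h]))]

lemma Vr_upd2_other (hij : i ≠ j) (hil : i ≠ l) (hjl : j ≠ l) (hil' : i ≠ l') (hjl' : j ≠ l')
    (hll : l' ≠ l) (ω : Cfg n) (s : Bool × Bool) :
    Vr i j l' (upd2 ω (edge i l hil) (edge j l hjl) s) = Vr i j l' ω := by
  unfold Vr
  rw [eInd_upd2_other₁ hij hil hjl hil' hll, eInd_upd2_other₂ hij hil hjl hjl' hll]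

lemma Ur_upd2_other (hij : i ≠ j) (hil : i ≠ l) (hjl : j ≠ l) (hil' : i ≠ l') (hjl' : j ≠ l')
    (hll : l' ≠ l) (ω : Cfg n) (s : Bool × Bool) :
    Ur i j l' (upd2 ω (edge i l hil) (edge j l hjl) s) = Ur i j l' ω := by
  unfold Ur
  rw [eInd_upd2_other₁ hij hil hjl hil' hll, eInd_upd2_other₂ hij hil hjl hjl' hll]

lemma T_upd2 (hij : i ≠ j) (hil : i ≠ l) (hjl : j ≠ l) (ω : Cfg n)
    (s s' : Bool × Bool) (hs : s ≠ (false, false)) (hs' : s' ≠ (false, false)) :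
    Tij i j (upd2 ω (edge i l hil) (edge j l hjl) s)
      = Tij i j (upd2 ω (edge i l hil) (edge j l hjl) s') := by
  unfold Tij
  refine Finset.sum_congr rfl fun l' hl' => ?_
  obtain ⟨hil', hjl'⟩ := memK hl'
  by_cases hll : l' = l
  · subst hll
    rw [eInd_upd2_at₁ hij hil hjl, eInd_upd2_at₂ hij hil hjl,
      eInd_upd2_at₁ hij hil hjl, eInd_upd2_at₂ hij hil hjl]
    obtain ⟨a, b⟩ := s
    obtain ⟨a', b'⟩ := s'
    cases a <;> cases b <;> cases a' <;> cases b' <;> simp_all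
  · rw [eInd_upd2_other₁ hij hil hjl hil' hll, eInd_upd2_other₂ hij hil hjl hjl' hll,
      eInd_upd2_other₁ hij hil hjl hil' hll, eInd_upd2_other₂ hij hil hjl hjl' hll]

lemma Im_upd2 (hij : i ≠ j) (hil : i ≠ l) (hjl : j ≠ l) (m : ℕ) (ω : Cfg n)
    (s s' : Bool × Bool) (hs : s ≠ (false, false)) (hs' : s' ≠ (false, false)) :
    Im i j m (upd2 ω (edge i l hil) (edge j l hjl) s)
      = Im i j m (upd2 ω (edge i l hil) (edge j l hjl) s') := by
  unfold Im
  rw [T_upd2 hij hil hjl ω s s' hs hs']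

/-- The one-vertex resampling identity, with a spectator factor `F`. -/
lemma perl (p : ℝ) (hp0 : 0 < p) (hij : i ≠ j) (m : ℕ) (hil : i ≠ l) (hjl : j ≠ l)
    (F : Cfg n → ℝ)
    (hF : ∀ (ω : Cfg n) (s : Bool × Bool), F (upd2 ω (edge i l hil) (edge j l hjl) s) = F ω) :
    (2 - p) * ∑ ω : Cfg n, w p ω * (Im i j m ω * F ω) * Vr i j l ω
      = p * ∑ ω : Cfg n, w p ω * (Im i j m ω * F ω) * Ur i j l ω := by
  have hkey := key p hp0 (edge_pair_ne hij hil hjl) (fun ω => Im i j m ω * F ω)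
    (fun ω s s' hs hs' => by
      beta_reduce
      rw [Im_upd2 hij hil hjl m ω s s' hs hs', hF ω s, hF ω s'])
  rw [show (∑ ω : Cfg n, w p ω * (Im i j m ω * F ω) * Vr i j l ω)
      = ∑ ω : Cfg n, w p ω * (Im i j m ω * F ω) *
          (if ω (edge i l hil) = true ∧ ω (edge j l hjl) = true then 1 else 0) from
    Finset.sum_congr rfl fun ω _ => by rw [Vr_eq hil hjl]]
  rw [show (∑ ω : Cfg n, w p ω * (Im i j m ω * F ω) * Ur i j l ω)
      = ∑ ω : Cfg n, w p ω * (Im i j m ω * F ω) *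
          (if ω (edge i l hil) = true ∨ ω (edge j l hjl) = true then 1 else 0) from
    Finset.sum_congr rfl fun ω _ => by rw [Ur_eq hil hjl]]
  exact hkey

lemma Im_mul_T (i j : Fin n) (m : ℕ) (ω : Cfg n) :
    Im i j m ω * ((Tij i j ω : ℕ) : ℝ) = Im i j m ω * (m : ℝ) := by
  unfold Im
  by_cases h : Tij i j ω = m <;> simp [h]

end Graph


section Claims

variable {i j : Fin n}

lemma claim1_sum (p : ℝ) (hp0 : 0 < p) (hij : i ≠ j) (m : ℕ) :
    (2 - p) * ∑ l ∈ Finset.univ \ {i, j}, ∑ ω : Cfg n, w p ω * Im i j m ω * Vr i j l ω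
      = p * (m : ℝ) * ∑ ω : Cfg n, w p ω * Im i j m ω := by
  rw [Finset.mul_sum]
  have hper : ∀ l ∈ Finset.univ \ ({i, j} : Finset (Fin n)),
      (2 - p) * ∑ ω : Cfg n, w p ω * Im i j m ω * Vr i j l ω
        = p * ∑ ω : Cfg n, w p ω * Im i j m ω * Ur i j l ω := by
    intro l hl
    obtain ⟨hil, hjl⟩ := memK hl
    have := perl p hp0 hij m hil hjl (fun _ => 1) (fun _ _ => rfl)
    simpa using this
  rw [Finset.sum_congr rfl hper, ← Finset.mul_sum, Finset.sum_comm]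
  have h3 : ∀ ω : Cfg n, ∑ l ∈ Finset.univ \ ({i, j} : Finset (Fin n)),
      w p ω * Im i j m ω * Ur i j l ω = w p ω * Im i j m ω * (m : ℝ) := by
    intro ω
    rw [← Finset.mul_sum, ← Tcast, mul_assoc, Im_mul_T, ← mul_assoc]
  rw [Finset.sum_congr rfl fun ω _ => h3 ω, ← Finset.sum_mul]
  ring

lemma claim1 (p : ℝ) (hp0 : 0 < p) (hij : i ≠ j) (m : ℕ) :
    (2 - p) * ∑ ω : Cfg n, w p ω * Im i j m ω * ((Sij i j ω : ℕ) : ℝ)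
      = p * (m : ℝ) * ∑ ω : Cfg n, w p ω * Im i j m ω := by
  have hL : ∑ ω : Cfg n, w p ω * Im i j m ω * ((Sij i j ω : ℕ) : ℝ)
      = ∑ l ∈ Finset.univ \ {i, j}, ∑ ω : Cfg n, w p ω * Im i j m ω * Vr i j l ω :=
    (Finset.sum_congr rfl fun ω _ => by rw [Scast, Finset.mul_sum]).trans Finset.sum_comm
  rw [hL]
  exact claim1_sum p hp0 hij m

lemma Im_mul_TT (i j : Fin n) (m : ℕ) (ω : Cfg n) :
    Im i j m ω * (((Tij i j ω : ℕ) : ℝ) ^ 2 - ((Tij i j ω : ℕ) : ℝ))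
      = Im i j m ω * ((m : ℝ) ^ 2 - (m : ℝ)) := by
  unfold Im
  by_cases h : Tij i j ω = m <;> simp [h]

lemma claim2 (p : ℝ) (hp0 : 0 < p) (hij : i ≠ j) (m : ℕ) :
    (2 - p) ^ 2 * ∑ ω : Cfg n, w p ω * Im i j m ω * ((Sij i j ω : ℕ) : ℝ) ^ 2
      = (p * (2 - p) * (m : ℝ) + p ^ 2 * ((m : ℝ) ^ 2 - (m : ℝ)))
          * ∑ ω : Cfg n, w p ω * Im i j m ω := by
  classical
  have hL : ∑ ω : Cfg n, w p ω * Im i j m ω * ((Sij i j ω : ℕ) : ℝ) ^ 2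
      = ∑ l ∈ Finset.univ \ {i, j}, ∑ l' ∈ Finset.univ \ {i, j},
          ∑ ω : Cfg n, w p ω * Im i j m ω * (Vr i j l ω * Vr i j l' ω) := by
    have hptw : ∀ ω : Cfg n, w p ω * Im i j m ω * ((Sij i j ω : ℕ) : ℝ) ^ 2
        = ∑ l ∈ Finset.univ \ ({i, j} : Finset (Fin n)), ∑ l' ∈ Finset.univ \ ({i, j} : Finset (Fin n)),
            w p ω * Im i j m ω * (Vr i j l ω * Vr i j l' ω) := by
      intro ω
      rw [Scast, sq, Finset.sum_mul_sum, Finset.mul_sum]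
      exact Finset.sum_congr rfl fun l _ => by rw [Finset.mul_sum]
    rw [Finset.sum_congr rfl fun ω _ => hptw ω, Finset.sum_comm]
    exact Finset.sum_congr rfl fun l _ => Finset.sum_comm
  rw [hL]
  have hsplit : ∀ l ∈ Finset.univ \ ({i, j} : Finset (Fin n)),
      ∑ l' ∈ Finset.univ \ ({i, j} : Finset (Fin n)),
          ∑ ω : Cfg n, w p ω * Im i j m ω * (Vr i j l ω * Vr i j l' ω)
        = (∑ ω : Cfg n, w p ω * Im i j m ω * Vr i j l ω)
          + ∑ l' ∈ (Finset.univ \ ({i, j} : Finset (Fin n))).erase l,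
              ∑ ω : Cfg n, w p ω * Im i j m ω * (Vr i j l ω * Vr i j l' ω) := by
    intro l hl
    obtain ⟨hil, hjl⟩ := memK hl
    rw [← Finset.add_sum_erase _ _ hl]
    congr 1
    exact Finset.sum_congr rfl fun ω _ => by rw [Vr_mul_self hil hjl]
  rw [Finset.sum_congr rfl hsplit, Finset.sum_add_distrib]
  -- off-diagonal evaluation
  have hoff : ∀ l ∈ Finset.univ \ ({i, j} : Finset (Fin n)),
      ∀ l' ∈ (Finset.univ \ ({i, j} : Finset (Fin n))).erase l,
      (2 - p) ^ 2 * ∑ ω : Cfg n, w p ω * Im i j m ω * (Vr i j l ω * Vr i j l' ω)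
        = p ^ 2 * ∑ ω : Cfg n, w p ω * Im i j m ω * (Ur i j l ω * Ur i j l' ω) := by
    intro l hl l' hl'
    have hll : l' ≠ l := Finset.ne_of_mem_erase hl'
    obtain ⟨hil, hjl⟩ := memK hl
    obtain ⟨hil', hjl'⟩ := memK (Finset.mem_of_mem_erase hl')
    have s1 : (2 - p) * ∑ ω : Cfg n, w p ω * (Im i j m ω * Vr i j l' ω) * Vr i j l ω
        = p * ∑ ω : Cfg n, w p ω * (Im i j m ω * Vr i j l' ω) * Ur i j l ω :=
      perl p hp0 hij m hil hjl (Vr i j l')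
        (fun ω s => Vr_upd2_other hij hil hjl hil' hjl' hll ω s)
    have s2 : (2 - p) * ∑ ω : Cfg n, w p ω * (Im i j m ω * Ur i j l ω) * Vr i j l' ω
        = p * ∑ ω : Cfg n, w p ω * (Im i j m ω * Ur i j l ω) * Ur i j l' ω :=
      perl p hp0 hij m hil' hjl' (Ur i j l)
        (fun ω s => Ur_upd2_other hij hil' hjl' hil hjl hll.symm ω s)
    have r1 : ∑ ω : Cfg n, w p ω * Im i j m ω * (Vr i j l ω * Vr i j l' ω)
        = ∑ ω : Cfg n, w p ω * (Im i j m ω * Vr i j l' ω) * Vr i j l ω :=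
      Finset.sum_congr rfl fun ω _ => by ring
    have r2 : ∑ ω : Cfg n, w p ω * (Im i j m ω * Vr i j l' ω) * Ur i j l ω
        = ∑ ω : Cfg n, w p ω * (Im i j m ω * Ur i j l ω) * Vr i j l' ω :=
      Finset.sum_congr rfl fun ω _ => by ring
    have r3 : ∑ ω : Cfg n, w p ω * (Im i j m ω * Ur i j l ω) * Ur i j l' ω
        = ∑ ω : Cfg n, w p ω * Im i j m ω * (Ur i j l ω * Ur i j l' ω) :=
      Finset.sum_congr rfl fun ω _ => by ring
    calc (2 - p) ^ 2 * ∑ ω : Cfg n, w p ω * Im i j m ω * (Vr i j l ω * Vr i j l' ω)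
        = (2 - p) * ((2 - p) * ∑ ω : Cfg n, w p ω * (Im i j m ω * Vr i j l' ω) * Vr i j l ω) := by
          rw [r1]; ring
      _ = (2 - p) * (p * ∑ ω : Cfg n, w p ω * (Im i j m ω * Vr i j l' ω) * Ur i j l ω) := by
          rw [s1]
      _ = p * ((2 - p) * ∑ ω : Cfg n, w p ω * (Im i j m ω * Ur i j l ω) * Vr i j l' ω) := by
          rw [r2]; ring
      _ = p * (p * ∑ ω : Cfg n, w p ω * (Im i j m ω * Ur i j l ω) * Ur i j l' ω) := by
          rw [s2]
      _ = p ^ 2 * ∑ ω : Cfg n, w p ω * Im i j m ω * (Ur i j l ω * Ur i j l' ω) := by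
          rw [r3]; ring
  -- sum of off-diagonal terms
  have hB : (2 - p) ^ 2 * ∑ l ∈ Finset.univ \ ({i, j} : Finset (Fin n)),
      ∑ l' ∈ (Finset.univ \ ({i, j} : Finset (Fin n))).erase l,
        ∑ ω : Cfg n, w p ω * Im i j m ω * (Vr i j l ω * Vr i j l' ω)
      = p ^ 2 * ((m : ℝ) ^ 2 - (m : ℝ)) * ∑ ω : Cfg n, w p ω * Im i j m ω := by
    rw [Finset.mul_sum]
    rw [Finset.sum_congr rfl fun l hl => by
      rw [Finset.mul_sum, Finset.sum_congr rfl fun l' hl' => hoff l hl l' hl']]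
    rw [Finset.sum_congr rfl fun l (hl : l ∈ Finset.univ \ ({i, j} : Finset (Fin n))) =>
      (Finset.mul_sum _ _ _).symm]
    rw [← Finset.mul_sum]
    rw [Finset.sum_congr rfl fun l (hl : l ∈ Finset.univ \ ({i, j} : Finset (Fin n))) =>
      Finset.sum_comm]
    rw [Finset.sum_comm]
    have hptw : ∀ ω : Cfg n, ∑ l ∈ Finset.univ \ ({i, j} : Finset (Fin n)),
        ∑ l' ∈ (Finset.univ \ ({i, j} : Finset (Fin n))).erase l,
          w p ω * Im i j m ω * (Ur i j l ω * Ur i j l' ω)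
        = w p ω * Im i j m ω * ((m : ℝ) ^ 2 - (m : ℝ)) := by
      intro ω
      have hUU : ∑ l ∈ Finset.univ \ ({i, j} : Finset (Fin n)),
          ∑ l' ∈ (Finset.univ \ ({i, j} : Finset (Fin n))).erase l,
            Ur i j l ω * Ur i j l' ω
          = ((Tij i j ω : ℕ) : ℝ) ^ 2 - ((Tij i j ω : ℕ) : ℝ) := by
        have hrow : ∀ l ∈ Finset.univ \ ({i, j} : Finset (Fin n)),
            ∑ l' ∈ (Finset.univ \ ({i, j} : Finset (Fin n))).erase l,
              Ur i j l ω * Ur i j l' ω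
            = Ur i j l ω * ((Tij i j ω : ℕ) : ℝ) - Ur i j l ω := by
          intro l hl
          rw [Finset.sum_erase_eq_sub hl, ← Finset.mul_sum, ← Tcast,
            Ur_mul_self (memK hl).1 (memK hl).2]
        rw [Finset.sum_congr rfl hrow, Finset.sum_sub_distrib, ← Finset.sum_mul, ← Tcast]
        ring
      calc ∑ l ∈ Finset.univ \ ({i, j} : Finset (Fin n)),
          ∑ l' ∈ (Finset.univ \ ({i, j} : Finset (Fin n))).erase l,
            w p ω * Im i j m ω * (Ur i j l ω * Ur i j l' ω)
          = w p ω * Im i j m ω * (∑ l ∈ Finset.univ \ ({i, j} : Finset (Fin n)),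
              ∑ l' ∈ (Finset.univ \ ({i, j} : Finset (Fin n))).erase l,
                Ur i j l ω * Ur i j l' ω) := by
            rw [Finset.mul_sum]
            exact Finset.sum_congr rfl fun l _ => by rw [Finset.mul_sum]
        _ = w p ω * Im i j m ω * (((Tij i j ω : ℕ) : ℝ) ^ 2 - ((Tij i j ω : ℕ) : ℝ)) := by
            rw [hUU]
        _ = w p ω * Im i j m ω * ((m : ℝ) ^ 2 - (m : ℝ)) := by
            rw [mul_assoc, Im_mul_TT, ← mul_assoc]
    rw [Finset.sum_congr rfl fun ω _ => hptw ω, ← Finset.sum_mul]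
    ring
  rw [mul_add, hB]
  have hA : (2 - p) ^ 2 * ∑ l ∈ Finset.univ \ ({i, j} : Finset (Fin n)),
      ∑ ω : Cfg n, w p ω * Im i j m ω * Vr i j l ω
      = (2 - p) * (p * (m : ℝ) * ∑ ω : Cfg n, w p ω * Im i j m ω) := by
    rw [← claim1_sum p hp0 hij m]; ring
  rw [hA]
  ring

end Claims


section Measure

lemma eInd_le_one (ω : Cfg n) (i k : Fin n) : eInd ω i k ≤ 1 := by
  unfold eInd
  split_ifs <;> omega

lemma gnp_prob (p : ℝ≥0∞) (hple : p ≤ 1) : IsProbabilityMeasure (gnp n p hple) := by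
  unfold gnp; infer_instance

lemma gnp_singleton (p : ℝ) (hp0 : 0 ≤ p) (hp1 : p ≤ 1) (hple : ENNReal.ofReal p ≤ 1)
    (ω : Cfg n) : ((gnp n (ENNReal.ofReal p) hple) {ω}).toReal = w p ω := by
  have hset : ({ω} : Set (Cfg n)) = Set.pi Set.univ (fun e => {ω e}) := by
    ext f; simp [funext_iff, Set.mem_pi, eq_comm]
  rw [gnp, hset, Measure.pi_pi, ENNReal.toReal_prod]
  unfold w
  refine Finset.prod_congr rfl fun e _ => ?_
  rw [PMF.toMeasure_apply_singleton _ _ (measurableSet_singleton _)]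
  erw [PMF.bernoulli_apply]
  have hc : ((bif ω e then (ENNReal.ofReal p).toNNReal else 1 - (ENNReal.ofReal p).toNNReal :
      NNReal) : ℝ≥0∞) = bif ω e then ENNReal.ofReal p else 1 - ENNReal.ofReal p := by
    cases ω e <;> simp [ENNReal.coe_sub, ENNReal.coe_toNNReal ENNReal.ofReal_ne_top]
  rw [hc]
  cases h : ω e
  · have h1 : (1 : ℝ≥0∞) - ENNReal.ofReal p = ENNReal.ofReal (1 - p) := by
      rw [ENNReal.ofReal_sub _ hp0, ENNReal.ofReal_one]
    simp only [Bool.cond_false, h1, bb, ENNReal.toReal_ofReal (by linarith : (0:ℝ) ≤ 1 - p)]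
    simp
  · simp [bb, ENNReal.toReal_ofReal hp0]

lemma gnp_finset (p : ℝ) (hp0 : 0 ≤ p) (hp1 : p ≤ 1) (hple : ENNReal.ofReal p ≤ 1)
    (A : Finset (Cfg n)) :
    ((gnp n (ENNReal.ofReal p) hple) (↑A : Set (Cfg n))).toReal = ∑ ω ∈ A, w p ω := by
  haveI := gnp_prob (n := n) (ENNReal.ofReal p) hple
  have hcup : (↑A : Set (Cfg n)) = ⋃ ω ∈ A, ({ω} : Set (Cfg n)) := by
    ext x; simp
  have hmeas : (gnp n (ENNReal.ofReal p) hple) (↑A : Set (Cfg n))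
      = ∑ ω ∈ A, (gnp n (ENNReal.ofReal p) hple) {ω} := by
    rw [hcup, measure_biUnion_finset]
    · intro x _ y _ hxy
      simp only [Function.onFun]
      exact Set.disjoint_singleton.2 hxy
    · exact fun b _ => measurableSet_singleton b
  rw [hmeas, ENNReal.toReal_sum (fun a _ => measure_ne_top _ _)]
  exact Finset.sum_congr rfl fun ω _ => gnp_singleton p hp0 hp1 hple ω

lemma gnp_setOf (p : ℝ) (hp0 : 0 ≤ p) (hp1 : p ≤ 1) (hple : ENNReal.ofReal p ≤ 1)
    (P : Cfg n → Prop) [DecidablePred P] :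
    ((gnp n (ENNReal.ofReal p) hple) {ω | P ω}).toReal
      = ∑ ω ∈ Finset.univ.filter P, w p ω := by
  have : {ω | P ω} = (↑(Finset.univ.filter P) : Set (Cfg n)) := by ext x; simp
  rw [this, gnp_finset p hp0 hp1 hple]

lemma gnp_integral (p : ℝ) (hp0 : 0 ≤ p) (hp1 : p ≤ 1) (hple : ENNReal.ofReal p ≤ 1)
    (f : Cfg n → ℝ) :
    ∫ ω, f ω ∂(gnp n (ENNReal.ofReal p) hple) = ∑ ω : Cfg n, w p ω * f ω := by
  haveI := gnp_prob (n := n) (ENNReal.ofReal p) hple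
  rw [integral_fintype .of_finite]
  exact Finset.sum_congr rfl fun ω _ => by
    rw [measureReal_def, gnp_singleton p hp0 hp1 hple ω, smul_eq_mul]

end Measure

end JacV

open JacV

/-- The variance of the Jaccard index `J_ij` in `G(n,p)` equals
`(2p(1-p)/(2-p)²) · Σ_{m=1}^{n-2} (1/m) P(T_ij = m)`. -/
theorem variance_jaccard (n : ℕ) (hn : 3 ≤ n) (p : ℝ) (hp : p ∈ Set.Ioo (0 : ℝ) 1)
    (i j : Fin n) (hij : i ≠ j) :
    variance (jac p i j) (gnp n (ENNReal.ofReal p) (ENNReal.ofReal_le_one.mpr hp.2.le))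
      = (2 * p * (1 - p) / (2 - p) ^ 2) *
          ∑ m ∈ Finset.Icc 1 (n - 2), (1 / (m : ℝ)) *
            (gnp n (ENNReal.ofReal p) (ENNReal.ofReal_le_one.mpr hp.2.le)
              {ω | Tij i j ω = m}).toReal := by
  classical
  have hp0 : 0 < p := hp.1
  have hp1 : p < 1 := hp.2
  have h2p : (2:ℝ) - p ≠ 0 := by linarith
  set μ := gnp n (ENNReal.ofReal p) (ENNReal.ofReal_le_one.mpr hp.2.le) with hμ
  haveI : IsProbabilityMeasure μ := gnp_prob _ _
  set C : ℝ := 2 * p * (1 - p) / (2 - p) ^ 2 with hC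
  set Q : ℝ := p / (2 - p) with hQ
  set W : ℕ → ℝ := fun m => ∑ ω : Cfg n, w p ω * Im i j m ω with hWdef
  -- bridge between measures of level sets and weighted sums
  have hWm : ∀ m : ℕ, (μ {ω | Tij i j ω = m}).toReal = W m := by
    intro m
    rw [hμ, gnp_setOf p hp0.le hp1.le _ (fun ω => Tij i j ω = m)]
    simp only [hWdef]
    rw [Finset.sum_filter]
    exact Finset.sum_congr rfl fun ω _ => by
      by_cases h : Tij i j ω = m <;> simp [Im, h]
  -- T is at most n - 2
  have hTle : ∀ ω : Cfg n, Tij i j ω ≤ n - 2 := by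
    intro ω
    have hcard : (Finset.univ \ ({i, j} : Finset (Fin n))).card = n - 2 := by
      rw [Finset.card_sdiff_of_subset (Finset.subset_univ _), Finset.card_univ, Fintype.card_fin]
      have h2 : ({i, j} : Finset (Fin n)).card = 2 := by
        rw [Finset.card_insert_of_notMem (by simp [hij]), Finset.card_singleton]
      rw [h2]
    have hb : Tij i j ω ≤ (Finset.univ \ ({i, j} : Finset (Fin n))).card := by
      unfold Tij
      calc ∑ k ∈ Finset.univ \ {i, j}, max (eInd ω i k) (eInd ω j k)
          ≤ ∑ _k ∈ Finset.univ \ ({i, j} : Finset (Fin n)), 1 :=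
            Finset.sum_le_sum fun k _ => max_le (eInd_le_one ω i k) (eInd_le_one ω j k)
        _ = (Finset.univ \ ({i, j} : Finset (Fin n))).card := by
            rw [Finset.sum_const, smul_eq_mul, mul_one]
    omega
  have hrange : Finset.range (n - 1) = insert 0 (Finset.Icc 1 (n - 2)) := by
    ext m
    simp only [Finset.mem_range, Finset.mem_insert, Finset.mem_Icc]
    omega
  have h0not : (0:ℕ) ∉ Finset.Icc 1 (n - 2) := by simp
  have hpart : ∀ ω : Cfg n, ∑ m ∈ Finset.range (n - 1), Im i j m ω = 1 := by
    intro ω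
    simp only [Im]
    rw [Finset.sum_ite_eq]
    exact if_pos (Finset.mem_range.2 (by have := hTle ω; omega))
  have hWtot : ∑ m ∈ Finset.range (n - 1), W m = 1 := by
    simp only [hWdef]
    rw [Finset.sum_comm]
    rw [Finset.sum_congr rfl fun (ω : Cfg n) _ => by
      rw [← Finset.mul_sum, hpart ω, mul_one]]
    have huniv : ∑ ω : Cfg n, w p ω = (μ Set.univ).toReal := by
      rw [hμ, ← Finset.coe_univ, gnp_finset p hp0.le hp1.le]
    rw [huniv, measure_univ, ENNReal.toReal_one]
  -- normalized claims
  have claim1' : ∀ m : ℕ, ∑ ω : Cfg n, w p ω * Im i j m ω * ((Sij i j ω : ℕ) : ℝ)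
      = Q * (m : ℝ) * W m := by
    intro m
    refine mul_left_cancel₀ h2p ?_
    rw [claim1 p hp0 hij m]
    simp only [hQ, hWdef]
    field_simp
  have claim2' : ∀ m : ℕ, ∑ ω : Cfg n, w p ω * Im i j m ω * ((Sij i j ω : ℕ) : ℝ) ^ 2
      = ((p * (2 - p) * (m : ℝ) + p ^ 2 * ((m : ℝ) ^ 2 - (m : ℝ))) / (2 - p) ^ 2) * W m := by
    intro m
    refine mul_left_cancel₀ (pow_ne_zero 2 h2p) ?_
    rw [claim2 p hp0 hij m]
    simp only [hWdef]
    field_simp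
  -- splitting an expectation according to the value of T
  have hsplitJ : ∀ f : Cfg n → ℝ, ∑ ω : Cfg n, w p ω * f ω
      = ∑ m ∈ Finset.range (n - 1), ∑ ω : Cfg n, w p ω * Im i j m ω * f ω := by
    intro f
    have hptw : ∀ ω : Cfg n, w p ω * f ω
        = ∑ m ∈ Finset.range (n - 1), w p ω * Im i j m ω * f ω := by
      intro ω
      rw [show (∑ m ∈ Finset.range (n - 1), w p ω * Im i j m ω * f ω)
          = (∑ m ∈ Finset.range (n - 1), Im i j m ω) * (w p ω * f ω) from by
        rw [Finset.sum_mul]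
        exact Finset.sum_congr rfl fun m _ => by ring]
      rw [hpart ω, one_mul]
    rw [Finset.sum_congr rfl fun ω _ => hptw ω]
    exact Finset.sum_comm
  -- first moment
  have hiJ : ∫ ω, jac p i j ω ∂μ = Q := by
    rw [hμ, gnp_integral p hp0.le hp1.le, hsplitJ (jac p i j), hrange,
      Finset.sum_insert h0not]
    have hm0 : ∑ ω : Cfg n, w p ω * Im i j 0 ω * jac p i j ω = Q * W 0 := by
      have hptw : ∀ ω : Cfg n, w p ω * Im i j 0 ω * jac p i j ω
          = (w p ω * Im i j 0 ω) * Q := by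
        intro ω
        by_cases h : Tij i j ω = 0
        · simp [Im, jac, h, hQ]
        · simp [Im, jac, h]
      rw [Finset.sum_congr rfl fun ω _ => hptw ω, ← Finset.sum_mul]
      simp only [hWdef]
      ring
    have hmpos : ∀ m ∈ Finset.Icc 1 (n - 2),
        ∑ ω : Cfg n, w p ω * Im i j m ω * jac p i j ω = Q * W m := by
      intro m hm
      have hm0' : m ≠ 0 := by
        have := (Finset.mem_Icc.1 hm).1; omega
      have hmR : (m : ℝ) ≠ 0 := Nat.cast_ne_zero.2 hm0'
      have hptw : ∀ ω : Cfg n, w p ω * Im i j m ω * jac p i j ω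
          = (w p ω * Im i j m ω * ((Sij i j ω : ℕ) : ℝ)) * (1 / (m : ℝ)) := by
        intro ω
        by_cases h : Tij i j ω = m
        · have hT0 : Tij i j ω ≠ 0 := by omega
          have hj : jac p i j ω = ((Sij i j ω : ℕ) : ℝ) / (m : ℝ) := by
            rw [jac, if_neg hT0, h]
          have hI : Im i j m ω = 1 := by rw [Im, if_pos h]
          rw [hj, hI]
          field_simp
        · simp [Im, jac, h]
      rw [Finset.sum_congr rfl fun ω _ => hptw ω, ← Finset.sum_mul, claim1' m]
      field_simp
    rw [hm0, Finset.sum_congr rfl hmpos, ← Finset.mul_sum]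
    have hone : W 0 + ∑ m ∈ Finset.Icc 1 (n - 2), W m = 1 := by
      rw [← Finset.sum_insert h0not, ← hrange]
      exact hWtot
    linear_combination Q * hone
  -- second moment
  have hiJ2 : ∫ ω, jac p i j ω ^ 2 ∂μ
      = Q ^ 2 + C * ∑ m ∈ Finset.Icc 1 (n - 2), (1 / (m : ℝ)) * W m := by
    rw [hμ, gnp_integral p hp0.le hp1.le, hsplitJ (fun ω => jac p i j ω ^ 2), hrange,
      Finset.sum_insert h0not]
    have hm0 : ∑ ω : Cfg n, w p ω * Im i j 0 ω * jac p i j ω ^ 2 = Q ^ 2 * W 0 := by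
      have hptw : ∀ ω : Cfg n, w p ω * Im i j 0 ω * jac p i j ω ^ 2
          = (w p ω * Im i j 0 ω) * Q ^ 2 := by
        intro ω
        by_cases h : Tij i j ω = 0
        · simp [Im, jac, h, hQ]
        · simp [Im, jac, h]
      rw [Finset.sum_congr rfl fun ω _ => hptw ω, ← Finset.sum_mul]
      simp only [hWdef]
      ring
    have hmpos : ∀ m ∈ Finset.Icc 1 (n - 2),
        ∑ ω : Cfg n, w p ω * Im i j m ω * jac p i j ω ^ 2
          = (Q ^ 2 + C * (1 / (m : ℝ))) * W m := by
      intro m hm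
      have hm0' : m ≠ 0 := by
        have := (Finset.mem_Icc.1 hm).1; omega
      have hmR : (m : ℝ) ≠ 0 := Nat.cast_ne_zero.2 hm0'
      have hptw : ∀ ω : Cfg n, w p ω * Im i j m ω * jac p i j ω ^ 2
          = (w p ω * Im i j m ω * ((Sij i j ω : ℕ) : ℝ) ^ 2) * (1 / (m : ℝ) ^ 2) := by
        intro ω
        by_cases h : Tij i j ω = m
        · have hT0 : Tij i j ω ≠ 0 := by omega
          have hj : jac p i j ω = ((Sij i j ω : ℕ) : ℝ) / (m : ℝ) := by
            rw [jac, if_neg hT0, h]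
          have hI : Im i j m ω = 1 := by rw [Im, if_pos h]
          rw [hj, hI]
          field_simp
        · simp [Im, jac, h]
      rw [Finset.sum_congr rfl fun ω _ => hptw ω, ← Finset.sum_mul, claim2' m]
      simp only [hQ, hC]
      field_simp
      ring
    rw [hm0, Finset.sum_congr rfl hmpos]
    have hone : W 0 + ∑ m ∈ Finset.Icc 1 (n - 2), W m = 1 := by
      rw [← Finset.sum_insert h0not, ← hrange]
      exact hWtot
    rw [show (∑ m ∈ Finset.Icc 1 (n - 2), (Q ^ 2 + C * (1 / (m : ℝ))) * W m)
        = Q ^ 2 * (∑ m ∈ Finset.Icc 1 (n - 2), W m)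
          + C * ∑ m ∈ Finset.Icc 1 (n - 2), (1 / (m : ℝ)) * W m from by
      rw [Finset.mul_sum, Finset.mul_sum, ← Finset.sum_add_distrib]
      exact Finset.sum_congr rfl fun m _ => by ring]
    linear_combination Q ^ 2 * hone
  -- conclude
  have hpow : ((jac p i j : Cfg n → ℝ) ^ 2) = fun ω => jac p i j ω ^ 2 := by
    funext ω; simp
  rw [variance_eq_sub MemLp.of_discrete, hpow]
  rw [hiJ2, hiJ]
  simp only [hWm]
  ring
end

section
/- Let X_n ~ Bin(n, p_n) with n·p_n → ∞. Then for any fixed constants a ≥ 0 and b > 0, E[((n+a)p_n/(b+X_n) − 1)²] = O(1/(n·p_n)) as n → ∞. -/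
open MeasureTheory Filter
open scoped ENNReal

/-- `μ` is the distribution of a `Bin(n, p)` random variable: a probability measure on `ℕ`
with `μ {k} = C(n,k) p^k (1-p)^(n-k)`. -/
def IsBinomial (μ : Measure ℕ) (n : ℕ) (p : ℝ) : Prop :=
  IsProbabilityMeasure μ ∧
    ∀ k : ℕ, μ {k} = ENNReal.ofReal ((n.choose k : ℝ) * p ^ k * (1 - p) ^ (n - k))


open Finset in
lemma cast_mul_pred' (ν : ℕ) : ((ν * (ν - 1) : ℕ) : ℝ) = (ν : ℝ) * ((ν : ℝ) - 1) := by
  cases ν with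
  | zero => simp
  | succ k => push_cast [Nat.succ_sub_one]; ring

open Finset in
lemma bern_sum (n : ℕ) (x : ℝ) :
    ∑ ν ∈ range (n + 1), (n.choose ν : ℝ) * x ^ ν * (1 - x) ^ (n - ν) = 1 := by
  have := congrArg (Polynomial.eval x) (bernsteinPolynomial.sum ℝ n)
  simpa [bernsteinPolynomial, Polynomial.eval_finset_sum] using this

open Finset in
lemma bern_sum_smul (n : ℕ) (x : ℝ) :
    ∑ ν ∈ range (n + 1), (ν : ℝ) * ((n.choose ν : ℝ) * x ^ ν * (1 - x) ^ (n - ν))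
      = n * x := by
  have := congrArg (Polynomial.eval x) (bernsteinPolynomial.sum_smul ℝ n)
  simpa [bernsteinPolynomial, Polynomial.eval_finset_sum, mul_assoc] using this

open Finset in
lemma bern_sum_mul_smul (n : ℕ) (x : ℝ) :
    ∑ ν ∈ range (n + 1), (ν : ℝ) * ((ν : ℝ) - 1) *
        ((n.choose ν : ℝ) * x ^ ν * (1 - x) ^ (n - ν))
      = (n : ℝ) * ((n : ℝ) - 1) * x ^ 2 := by
  have := congrArg (Polynomial.eval x) (bernsteinPolynomial.sum_mul_smul ℝ n)
  simp only [Polynomial.eval_finset_sum, Polynomial.eval_smul, nsmul_eq_mul,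
    Polynomial.eval_mul, Polynomial.eval_natCast, Polynomial.eval_pow, Polynomial.eval_X,
    bernsteinPolynomial, Polynomial.eval_sub, Polynomial.eval_one] at this
  calc ∑ ν ∈ range (n + 1), (ν : ℝ) * ((ν : ℝ) - 1) *
        ((n.choose ν : ℝ) * x ^ ν * (1 - x) ^ (n - ν))
      = ∑ ν ∈ range (n + 1), ((ν * (ν - 1) : ℕ) : ℝ) *
        ((n.choose ν : ℝ) * x ^ ν * (1 - x) ^ (n - ν)) := by
        refine Finset.sum_congr rfl fun ν _ => by rw [cast_mul_pred']
    _ = ((n * (n - 1) : ℕ) : ℝ) * x ^ 2 := by simpa using this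
    _ = (n : ℝ) * ((n : ℝ) - 1) * x ^ 2 := by rw [cast_mul_pred']

open Finset in
lemma bern_variance (n : ℕ) (x : ℝ) :
    ∑ ν ∈ range (n + 1), ((n.choose ν : ℝ) * x ^ ν * (1 - x) ^ (n - ν)) *
        ((ν : ℝ) - (n : ℝ) * x) ^ 2
      = (n : ℝ) * x * (1 - x) := by
  have h : ∀ ν ∈ range (n + 1),
      ((n.choose ν : ℝ) * x ^ ν * (1 - x) ^ (n - ν)) * ((ν : ℝ) - (n : ℝ) * x) ^ 2
        = (ν : ℝ) * ((ν : ℝ) - 1) * ((n.choose ν : ℝ) * x ^ ν * (1 - x) ^ (n - ν))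
          + (1 - 2 * ((n : ℝ) * x)) * ((ν : ℝ) * ((n.choose ν : ℝ) * x ^ ν * (1 - x) ^ (n - ν)))
          + ((n : ℝ) * x) ^ 2 * ((n.choose ν : ℝ) * x ^ ν * (1 - x) ^ (n - ν)) := by
    intro ν _; ring
  rw [Finset.sum_congr rfl h, Finset.sum_add_distrib, Finset.sum_add_distrib,
    ← Finset.mul_sum, ← Finset.mul_sum, bern_sum, bern_sum_smul, bern_sum_mul_smul]
  ring

open Finset in
lemma bern_exp (n : ℕ) (x : ℝ) :
    ∑ ν ∈ range (n + 1), ((n.choose ν : ℝ) * x ^ ν * (1 - x) ^ (n - ν)) * Real.exp (-ν)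
      = (x * Real.exp (-1) + (1 - x)) ^ n := by
  rw [add_pow]
  refine Finset.sum_congr rfl fun ν _ => ?_
  have : Real.exp (-1) ^ ν = Real.exp (-ν) := by
    rw [← Real.exp_nat_mul]; ring_nf
  rw [mul_pow, this]; ring

lemma pointwise_bound (m d c b x : ℝ) (hb : 0 < b) (hm : 1 ≤ m) (hx : 0 ≤ x)
    (hc : (d - b) ^ 2 ≤ c ^ 2) :
    ((m + d) / (b + x) - 1) ^ 2
      ≤ 8 * (x - m) ^ 2 / m ^ 2 + 8 * c ^ 2 / m ^ 2
        + (2 * m ^ 2 + 2 * c ^ 2) * Real.exp (m / 2 - x) / b ^ 2 := by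
  have hbx : 0 < b + x := by linarith
  have h1 : (m + d) / (b + x) - 1 = (m + d - b - x) / (b + x) := by
    field_simp; ring
  rw [h1, div_pow]
  have hnum : (m + d - b - x) ^ 2 ≤ 2 * (x - m) ^ 2 + 2 * c ^ 2 := by
    nlinarith [sq_nonneg ((m - x) - (d - b))]
  rcases le_or_gt (m / 2) x with h | h
  · have hD2 : (m / 2) ^ 2 ≤ (b + x) ^ 2 := by nlinarith
    have hpos : (0 : ℝ) < (m / 2) ^ 2 := by nlinarith
    calc (m + d - b - x) ^ 2 / (b + x) ^ 2
        ≤ (2 * (x - m) ^ 2 + 2 * c ^ 2) / ((m / 2) ^ 2) := by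
          apply div_le_div₀ (by positivity) hnum hpos hD2
      _ = 8 * (x - m) ^ 2 / m ^ 2 + 8 * c ^ 2 / m ^ 2 := by
          field_simp; ring
      _ ≤ _ := le_add_of_nonneg_right (by positivity)
  · have hnum2 : (m + d - b - x) ^ 2 ≤ 2 * m ^ 2 + 2 * c ^ 2 := by nlinarith
    have hb2 : b ^ 2 ≤ (b + x) ^ 2 := by nlinarith
    have hexp : 1 ≤ Real.exp (m / 2 - x) := Real.one_le_exp (by linarith)
    calc (m + d - b - x) ^ 2 / (b + x) ^ 2
        ≤ (2 * m ^ 2 + 2 * c ^ 2) / b ^ 2 := by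
          apply div_le_div₀ (by positivity) hnum2 (by positivity) hb2
      _ ≤ (2 * m ^ 2 + 2 * c ^ 2) * Real.exp (m / 2 - x) / b ^ 2 := by
          gcongr
          exact le_mul_of_one_le_right (by positivity) hexp
      _ ≤ _ := le_add_of_nonneg_left (by positivity)

open Finset in
lemma integral_eq_sum (μ : Measure ℕ) [IsProbabilityMeasure μ] (n : ℕ)
    (h : ∀ k, n < k → μ {k} = 0) (f : ℕ → ℝ) :
    ∫ k, f k ∂μ = ∑ k ∈ range (n + 1), (μ {k}).toReal * f k := by
  have hnull : μ (↑(range (n + 1)) : Set ℕ)ᶜ = 0 := by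
    refine measure_mono_null (fun k hk => ?_) (measure_iUnion_null
      (s := fun i : ℕ => ({n + 1 + i} : Set ℕ)) fun i => h _ (by omega))
    simp only [Finset.coe_range, Set.mem_compl_iff, Set.mem_Iio, not_lt] at hk
    exact Set.mem_iUnion.2 ⟨k - (n + 1), by simp; omega⟩
  have hrest : μ.restrict ↑(range (n + 1)) = μ :=
    Measure.restrict_eq_self_of_ae_mem (by
      rw [MeasureTheory.ae_iff]; exact hnull)
  rw [← hrest, MeasureTheory.integral_finset _ IntegrableOn.finset]
  simp only [Measure.real, Measure.restrict_apply (MeasurableSet.singleton _), smul_eq_mul]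
  refine Finset.sum_congr rfl fun k hk => ?_
  congr 2
  rw [Set.inter_eq_self_of_subset_left]
  simpa using Finset.mem_range.1 hk

set_option maxHeartbeats 1000000 in
/-- If `X_n ~ Bin(n, p_n)` with `n p_n → ∞`, then for fixed `a ≥ 0` and `b > 0`,
`E[((n+a) p_n / (b + X_n) − 1)²] = O(1/(n p_n))` as `n → ∞`. -/
theorem binomial_inverse_moment_bound (p : ℕ → ℝ) (hp : ∀ n, p n ∈ Set.Ioo (0 : ℝ) 1)
    (μ : ℕ → Measure ℕ) (hμ : ∀ n, IsBinomial (μ n) n (p n))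
    (hnp : Tendsto (fun n : ℕ => (n : ℝ) * p n) atTop atTop)
    (a b : ℝ) (ha : 0 ≤ a) (hb : 0 < b) :
    ∃ C : ℝ, ∃ N : ℕ, ∀ n ≥ N,
      ∫ x, (((n : ℝ) + a) * p n / (b + (x : ℝ)) - 1) ^ 2 ∂(μ n)
        ≤ C / ((n : ℝ) * p n) := by
  classical
  set c : ℝ := a + b with hc_def
  set δ : ℝ := 1 / 2 - Real.exp (-1) with hδ_def
  have hδ : 0 < δ := by
    have h1 : Real.exp (-1) * Real.exp 1 = 1 := by rw [← Real.exp_add]; norm_num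
    have h2 : (2.7182818283 : ℝ) < Real.exp 1 := Real.exp_one_gt_d9
    have h3 : 0 < Real.exp (-1) := Real.exp_pos _
    have : Real.exp (-1) < 1 / 2 := by nlinarith
    simp only [hδ_def]; linarith
  obtain ⟨N, hN⟩ := eventually_atTop.1 (hnp.eventually_ge_atTop 1)
  refine ⟨8 + 8 * c ^ 2 + 256 * (2 + 2 * c ^ 2) / (b ^ 2 * δ ^ 4), N, fun n hn => ?_⟩
  have hx := hp n
  set x : ℝ := p n with hx_def
  obtain ⟨hx0, hx1⟩ := hx
  set m : ℝ := (n : ℝ) * x with hm_def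
  have hm1 : 1 ≤ m := hN n hn
  have hm0 : 0 < m := lt_of_lt_of_le one_pos hm1
  haveI : IsProbabilityMeasure (μ n) := (hμ n).1
  have hsupp : ∀ k, n < k → μ n {k} = 0 := fun k hk => by
    rw [(hμ n).2]; simp [Nat.choose_eq_zero_of_lt hk]
  set w : ℕ → ℝ := fun k => (n.choose k : ℝ) * x ^ k * (1 - x) ^ (n - k) with hw_def
  have hwnn : ∀ k, 0 ≤ w k := fun k =>
    mul_nonneg (mul_nonneg (Nat.cast_nonneg _) (pow_pos hx0 _).le)
      (pow_pos (by linarith) _).le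
  have hw : ∀ k, ((μ n) {k}).toReal = w k := fun k => by
    rw [(hμ n).2]; exact ENNReal.toReal_ofReal (hwnn k)
  have hdc : (a * x - b) ^ 2 ≤ c ^ 2 := by
    have h1 : 0 ≤ a * x := mul_nonneg ha hx0.le
    have h2 : a * x ≤ a := by nlinarith
    simp only [hc_def]; nlinarith
  set R : ℕ → ℝ := fun k =>
    8 * ((k : ℝ) - m) ^ 2 / m ^ 2 + 8 * c ^ 2 / m ^ 2
      + (2 * m ^ 2 + 2 * c ^ 2) * Real.exp (m / 2 - (k : ℝ)) / b ^ 2 with hR_def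
  rw [integral_eq_sum (μ n) n hsupp]
  calc ∑ k ∈ Finset.range (n + 1), ((μ n) {k}).toReal *
          (((n : ℝ) + a) * x / (b + (k : ℝ)) - 1) ^ 2
      = ∑ k ∈ Finset.range (n + 1), w k * (((n : ℝ) + a) * x / (b + (k : ℝ)) - 1) ^ 2 := by
        refine Finset.sum_congr rfl fun k _ => by rw [hw]
    _ ≤ ∑ k ∈ Finset.range (n + 1), w k * R k := by
        refine Finset.sum_le_sum fun k _ => mul_le_mul_of_nonneg_left ?_ (hwnn k)
        have hpb := pointwise_bound m (a * x) c b (k : ℝ) hb hm1 (Nat.cast_nonneg k) hdc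
        have hmx : m + a * x = ((n : ℝ) + a) * x := by rw [hm_def]; ring
        rw [hmx] at hpb
        exact hpb
    _ = 8 / m ^ 2 * (∑ k ∈ Finset.range (n + 1),
            ((n.choose k : ℝ) * x ^ k * (1 - x) ^ (n - k)) * ((k : ℝ) - (n : ℝ) * x) ^ 2)
          + 8 * c ^ 2 / m ^ 2 * (∑ k ∈ Finset.range (n + 1),
            (n.choose k : ℝ) * x ^ k * (1 - x) ^ (n - k))
          + (2 * m ^ 2 + 2 * c ^ 2) * Real.exp (m / 2) / b ^ 2
            * (∑ k ∈ Finset.range (n + 1),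
              ((n.choose k : ℝ) * x ^ k * (1 - x) ^ (n - k)) * Real.exp (-(k : ℝ))) := by
        rw [Finset.mul_sum, Finset.mul_sum, Finset.mul_sum, ← Finset.sum_add_distrib,
          ← Finset.sum_add_distrib]
        refine Finset.sum_congr rfl fun k _ => ?_
        have hes : Real.exp (m / 2 - (k : ℝ)) = Real.exp (m / 2) * Real.exp (-(k : ℝ)) := by
          rw [← Real.exp_add]; ring_nf
        simp only [hR_def, hw_def, hes]
        rw [hm_def]
        ring
    _ = 8 / m ^ 2 * ((n : ℝ) * x * (1 - x)) + 8 * c ^ 2 / m ^ 2 * 1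
          + (2 * m ^ 2 + 2 * c ^ 2) * Real.exp (m / 2) / b ^ 2
            * (x * Real.exp (-1) + (1 - x)) ^ n := by
        rw [bern_variance n x, bern_sum n x, bern_exp n x]
    _ ≤ (8 + 8 * c ^ 2 + 256 * (2 + 2 * c ^ 2) / (b ^ 2 * δ ^ 4)) / m := by
        have hb2 : (0 : ℝ) < b ^ 2 := pow_pos hb 2
        have hT1 : 8 / m ^ 2 * ((n : ℝ) * x * (1 - x)) ≤ 8 / m := by
          rw [← hm_def]
          have e : 8 / m ^ 2 * (m * (1 - x)) = 8 * (1 - x) / m := by field_simp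
          rw [e]
          exact (div_le_div_iff_of_pos_right hm0).2 (by linarith)
        have hT2 : 8 * c ^ 2 / m ^ 2 * 1 ≤ 8 * c ^ 2 / m := by
          rw [mul_one]
          exact div_le_div₀ (by positivity) le_rfl hm0 (by nlinarith)
        have hbase0 : 0 < x * Real.exp (-1) + (1 - x) :=
          add_pos (mul_pos hx0 (Real.exp_pos _)) (by linarith)
        have hbase : x * Real.exp (-1) + (1 - x) ≤ Real.exp (-(x * (1 - Real.exp (-1)))) := by
          have := Real.add_one_le_exp (-(x * (1 - Real.exp (-1)))); linarith
        have hpow : (x * Real.exp (-1) + (1 - x)) ^ n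
            ≤ Real.exp (-(m * (1 - Real.exp (-1)))) := by
          calc (x * Real.exp (-1) + (1 - x)) ^ n
              ≤ (Real.exp (-(x * (1 - Real.exp (-1))))) ^ n :=
                pow_le_pow_left₀ hbase0.le hbase n
            _ = Real.exp ((n : ℝ) * (-(x * (1 - Real.exp (-1))))) := (Real.exp_nat_mul _ n).symm
            _ = Real.exp (-(m * (1 - Real.exp (-1)))) := by rw [hm_def]; ring_nf
        have hT3 : (2 * m ^ 2 + 2 * c ^ 2) * Real.exp (m / 2) / b ^ 2
              * (x * Real.exp (-1) + (1 - x)) ^ n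
            ≤ 256 * (2 + 2 * c ^ 2) / (b ^ 2 * δ ^ 4) / m := by
          have hA : (0 : ℝ) ≤ (2 * m ^ 2 + 2 * c ^ 2) / b ^ 2 := by positivity
          have e2 : Real.exp (m / 2) * Real.exp (-(m * (1 - Real.exp (-1))))
              = Real.exp (-(δ * m)) := by
            rw [← Real.exp_add]; congr 1; rw [hδ_def]; ring
          have hδm : 0 < δ * m := mul_pos hδ hm0
          have h4 : δ * m / 4 ≤ Real.exp (δ * m / 4) := by
            linarith [Real.add_one_le_exp (δ * m / 4)]
          have h5 : (δ * m / 4) ^ 4 ≤ Real.exp (δ * m / 4) ^ 4 :=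
            pow_le_pow_left₀ (by positivity) h4 4
          have h6 : Real.exp (δ * m / 4) ^ (4 : ℕ) = Real.exp (δ * m) := by
            rw [← Real.exp_nat_mul]; congr 1; push_cast; ring
          have hexpb : Real.exp (-(δ * m)) ≤ 256 / (δ ^ 4 * m ^ 4) := by
            rw [Real.exp_neg]
            have hpos4 : (0 : ℝ) < (δ * m / 4) ^ 4 := by positivity
            calc (Real.exp (δ * m))⁻¹ ≤ ((δ * m / 4) ^ 4)⁻¹ :=
                inv_anti₀ hpos4 (by rw [← h6]; exact h5)
              _ = 256 / (δ ^ 4 * m ^ 4) := by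
                rw [inv_eq_one_div]; field_simp; ring
          have hq : (2 * m ^ 2 + 2 * c ^ 2) / m ^ 4 ≤ (2 + 2 * c ^ 2) / m := by
            rw [div_le_div_iff₀ (by positivity) hm0]
            have e0 : (0 : ℝ) ≤ m * (m - 1) := mul_nonneg hm0.le (by linarith)
            have e1 : (0 : ℝ) ≤ m ^ 3 * (m - 1) :=
              mul_nonneg (pow_pos hm0 3).le (by linarith)
            have e3 : (0 : ℝ) ≤ m * (m - 1) * (m ^ 2 + m + 1) :=
              mul_nonneg e0 (by nlinarith [sq_nonneg m])
            have hm4 : m ≤ m ^ 4 := by nlinarith [e3]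
            have hm34 : m ^ 3 ≤ m ^ 4 := by nlinarith [e1]
            nlinarith [mul_le_mul_of_nonneg_left hm4 (sq_nonneg c), hm34]
          calc (2 * m ^ 2 + 2 * c ^ 2) * Real.exp (m / 2) / b ^ 2
                * (x * Real.exp (-1) + (1 - x)) ^ n
              = (2 * m ^ 2 + 2 * c ^ 2) / b ^ 2
                  * (Real.exp (m / 2) * (x * Real.exp (-1) + (1 - x)) ^ n) := by ring
            _ ≤ (2 * m ^ 2 + 2 * c ^ 2) / b ^ 2
                  * (Real.exp (m / 2) * Real.exp (-(m * (1 - Real.exp (-1))))) := by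
                exact mul_le_mul_of_nonneg_left
                  (mul_le_mul_of_nonneg_left hpow (Real.exp_pos _).le) hA
            _ = (2 * m ^ 2 + 2 * c ^ 2) / b ^ 2 * Real.exp (-(δ * m)) := by rw [e2]
            _ ≤ (2 * m ^ 2 + 2 * c ^ 2) / b ^ 2 * (256 / (δ ^ 4 * m ^ 4)) :=
                mul_le_mul_of_nonneg_left hexpb hA
            _ = (2 * m ^ 2 + 2 * c ^ 2) / m ^ 4 * (256 / (δ ^ 4 * b ^ 2)) := by
                field_simp
            _ ≤ (2 + 2 * c ^ 2) / m * (256 / (δ ^ 4 * b ^ 2)) :=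
                mul_le_mul_of_nonneg_right hq (by positivity)
            _ = 256 * (2 + 2 * c ^ 2) / (b ^ 2 * δ ^ 4) / m := by
                field_simp
        have hsplit : (8 + 8 * c ^ 2 + 256 * (2 + 2 * c ^ 2) / (b ^ 2 * δ ^ 4)) / m
            = 8 / m + 8 * c ^ 2 / m + 256 * (2 + 2 * c ^ 2) / (b ^ 2 * δ ^ 4) / m := by
          ring
        rw [hsplit]
        exact add_le_add (add_le_add hT1 hT2) hT3
end

section
/- If X_n ~ Bin(n, p_n) and n·p_n → ∞, then for any fixed b > 0 and α > 0, E[1/(b + X_n)^α] = (1 + o(1))/(n·p_n)^α as n → ∞. -/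
open MeasureTheory Filter
open scoped ENNReal
open Finset

noncomputable def W (n : ℕ) (P : ℝ) (k : ℕ) : ℝ := (n.choose k : ℝ) * P^k * (1-P)^(n-k)

lemma W_nonneg (n : ℕ) (P : ℝ) (h0 : 0 ≤ P) (h1 : P ≤ 1) (k : ℕ) : 0 ≤ W n P k := by
  have h2 : (0:ℝ) ≤ 1 - P := by linarith
  exact mul_nonneg (mul_nonneg (Nat.cast_nonneg _) (pow_nonneg h0 _)) (pow_nonneg h2 _)

lemma W_sum_one (n : ℕ) (P : ℝ) : ∑ k ∈ range (n+1), W n P k = 1 := by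
  have h := bernsteinPolynomial.sum ℝ n
  have := congrArg (Polynomial.eval P) h
  simpa [Polynomial.eval_finset_sum, bernsteinPolynomial, W] using this

lemma W_variance (n : ℕ) (P : ℝ) :
    ∑ k ∈ range (n+1), ((n:ℝ)*P - k)^2 * W n P k = (n:ℝ)*P*(1-P) := by
  have h := bernsteinPolynomial.variance (R := ℝ) n
  have := congrArg (Polynomial.eval P) h
  simpa [Polynomial.eval_finset_sum, bernsteinPolynomial, W, nsmul_eq_mul] using this

lemma W_sum_le_one (n : ℕ) (P : ℝ) (h0 : 0 ≤ P) (h1 : P ≤ 1) (s : Finset ℕ)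
    (hs : s ⊆ range (n+1)) : ∑ k ∈ s, W n P k ≤ 1 := by
  rw [← W_sum_one n P]
  exact Finset.sum_le_sum_of_subset_of_nonneg hs (fun k _ _ => W_nonneg n P h0 h1 k)

lemma cheb (n : ℕ) (P δ : ℝ) (h0 : 0 < P) (h1 : P < 1) (hδ : 0 < δ)
    (hn : 0 < (n:ℝ)*P) (s : Finset ℕ) (hs : s ⊆ range (n+1))
    (hfar : ∀ k ∈ s, (δ*((n:ℝ)*P))^2 ≤ ((n:ℝ)*P - (k:ℝ))^2) :
    ∑ k ∈ s, W n P k ≤ 1/(δ^2*((n:ℝ)*P)) := by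
  set M := (n:ℝ)*P with hM
  have hd2 : (0:ℝ) < (δ*M)^2 := by positivity
  have step1 : ∑ k ∈ s, W n P k ≤ ∑ k ∈ s, (M - (k:ℝ))^2 * W n P k / (δ*M)^2 := by
    apply Finset.sum_le_sum
    intro k hk
    rw [le_div_iff₀ hd2]
    have hW := W_nonneg n P h0.le h1.le k
    nlinarith [hfar k hk]
  have step2 : ∑ k ∈ s, (M - (k:ℝ))^2 * W n P k / (δ*M)^2
      ≤ ∑ k ∈ range (n+1), (M - (k:ℝ))^2 * W n P k / (δ*M)^2 := by
    apply Finset.sum_le_sum_of_subset_of_nonneg hs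
    intro k _ _
    have hW := W_nonneg n P h0.le h1.le k
    positivity
  have step3 : ∑ k ∈ range (n+1), (M - (k:ℝ))^2 * W n P k / (δ*M)^2
      = M*(1-P)/(δ*M)^2 := by
    rw [← Finset.sum_div, W_variance n P]
  calc ∑ k ∈ s, W n P k ≤ M*(1-P)/(δ*M)^2 := by
        rw [← step3]; exact step1.trans step2
    _ ≤ M*1/(δ*M)^2 := by
        gcongr
        nlinarith
    _ = 1/(δ^2*M) := by field_simp

lemma fact_mul_pow_le (n m : ℕ) : n.factorial * n^m ≤ (n+m).factorial := by
  induction m with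
  | zero => simp
  | succ m ih =>
    rw [pow_succ, ← mul_assoc]
    calc n.factorial * n^m * n ≤ (n+m).factorial * (n+m+1) := Nat.mul_le_mul ih (by omega)
    _ = (n+m+1).factorial := by rw [Nat.factorial_succ]; ring

lemma choose_ident (n k m : ℕ) (h : k ≤ n) :
    n.choose k * k.factorial * (n+m).factorial
      = (n+m).choose (k+m) * (k+m).factorial * n.factorial := by
  apply Nat.eq_of_mul_eq_mul_right (Nat.factorial_pos (n-k))
  have h1 := Nat.choose_mul_factorial_mul_factorial h
  have h2 := Nat.choose_mul_factorial_mul_factorial (show k+m ≤ n+m by omega)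
  have h3 : n + m - (k+m) = n - k := by omega
  rw [h3] at h2
  calc n.choose k * k.factorial * (n+m).factorial * (n-k).factorial
      = (n.choose k * k.factorial * (n-k).factorial) * (n+m).factorial := by ring
    _ = n.factorial * (n+m).factorial := by rw [h1]
    _ = ((n+m).choose (k+m) * (k+m).factorial * (n-k).factorial) * n.factorial := by rw [h2]; ring
    _ = (n+m).choose (k+m) * (k+m).factorial * n.factorial * (n-k).factorial := by ring

lemma F3 (n m : ℕ) (P : ℝ) (hP : 0 < P) (hP1 : P ≤ 1) (hn : 1 ≤ n) :
    ∑ k ∈ range (n+1), W n P k * ((k.factorial : ℝ) / (k+m).factorial)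
      ≤ 1 / ((n:ℝ)*P)^m := by
  have hQ : (0:ℝ) ≤ 1 - P := by linarith
  have key : ∀ k ∈ range (n+1),
      W n P k * ((k.factorial : ℝ) / (k+m).factorial) * P^m
        = ((n.factorial : ℝ) / (n+m).factorial) * W (n+m) P (k+m) := by
    intro k hk
    have hkn : k ≤ n := by simpa [Nat.lt_succ_iff] using mem_range.mp hk
    have hc : ((n.choose k : ℝ) * k.factorial * (n+m).factorial)
        = ((n+m).choose (k+m) : ℝ) * (k+m).factorial * n.factorial := by
      exact_mod_cast congrArg (Nat.cast (R := ℝ)) (choose_ident n k m hkn)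
    have h3 : n + m - (k+m) = n - k := by omega
    have hf1 : (0:ℝ) < (k+m).factorial := by exact_mod_cast Nat.factorial_pos _
    have hf2 : (0:ℝ) < (n+m).factorial := by exact_mod_cast Nat.factorial_pos _
    simp only [W, h3]
    rw [pow_add]
    field_simp
    linear_combination ((1-P)^(n-k)) * hc
  have hsum : ∑ k ∈ range (n+1), W (n+m) P (k+m) ≤ 1 := by
    have e1 : ∑ k ∈ range (n+1), W (n+m) P (k+m)
        = ∑ j ∈ Ico m (n+1+m), W (n+m) P j := by
      rw [Finset.sum_Ico_eq_sum_range]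
      simp [add_comm, Nat.add_sub_cancel]
    rw [e1]
    calc ∑ j ∈ Ico m (n+1+m), W (n+m) P j
        ≤ ∑ j ∈ range (n+m+1), W (n+m) P j := by
          apply Finset.sum_le_sum_of_subset_of_nonneg
          · intro j hj
            simp only [mem_Ico] at hj
            simp only [mem_range]; omega
          · intro j _ _; exact W_nonneg _ _ hP.le hP1 j
      _ = 1 := W_sum_one _ _
  have hPm : (0:ℝ) < P^m := pow_pos hP m
  have step : (∑ k ∈ range (n+1), W n P k * ((k.factorial : ℝ) / (k+m).factorial)) * P^m
      ≤ (n.factorial : ℝ) / (n+m).factorial := by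
    rw [Finset.sum_mul]
    rw [Finset.sum_congr rfl key]
    rw [← Finset.mul_sum]
    calc ((n.factorial : ℝ) / (n+m).factorial) * ∑ k ∈ range (n+1), W (n+m) P (k+m)
        ≤ ((n.factorial : ℝ) / (n+m).factorial) * 1 := by
          apply mul_le_mul_of_nonneg_left hsum
          positivity
      _ = _ := mul_one _
  have hfle : (n.factorial : ℝ) / (n+m).factorial ≤ 1 / (n:ℝ)^m := by
    rw [div_le_div_iff₀ (by exact_mod_cast Nat.factorial_pos _) (by positivity)]
    have := fact_mul_pow_le n m
    have : (n.factorial : ℝ) * (n:ℝ)^m ≤ ((n+m).factorial : ℝ) := by exact_mod_cast this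
    linarith
  have hne : (0:ℝ) < (n:ℝ)^m := by positivity
  calc ∑ k ∈ range (n+1), W n P k * ((k.factorial : ℝ) / (k+m).factorial)
      = ((∑ k ∈ range (n+1), W n P k * ((k.factorial : ℝ) / (k+m).factorial)) * P^m) / P^m := by
        field_simp
    _ ≤ ((n.factorial : ℝ) / (n+m).factorial) / P^m := by
        gcongr
    _ ≤ (1 / (n:ℝ)^m) / P^m := by
        gcongr
    _ = 1 / ((n:ℝ)*P)^m := by rw [mul_pow]; field_simp

lemma fact_add_le (k m : ℕ) : (k+m).factorial ≤ k.factorial * (k+m)^m := by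
  induction m with
  | zero => simp
  | succ m ih =>
    have h1 : (k+(m+1)).factorial = (k+m+1) * (k+m).factorial := by
      rw [show k+(m+1) = (k+m)+1 by ring, Nat.factorial_succ]
    rw [h1]
    calc (k+m+1) * (k+m).factorial ≤ (k+m+1) * (k.factorial * (k+m)^m) :=
          Nat.mul_le_mul_left _ ih
      _ ≤ (k+m+1) * (k.factorial * (k+m+1)^m) := by
          apply Nat.mul_le_mul_left
          exact Nat.mul_le_mul_left _ (Nat.pow_le_pow_left (by omega) m)
      _ = k.factorial * (k+(m+1))^(m+1) := by
          rw [show k+(m+1) = k+m+1 by ring, pow_succ]; ring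

lemma sum_w_mul_le {s : Finset ℕ} {w f : ℕ → ℝ} {c d : ℝ}
    (hw : ∀ k ∈ s, 0 ≤ w k) (hf : ∀ k ∈ s, f k ≤ c) (hc : 0 ≤ c)
    (hs : ∑ k ∈ s, w k ≤ d) :
    ∑ k ∈ s, w k * f k ≤ c * d := by
  calc ∑ k ∈ s, w k * f k ≤ ∑ k ∈ s, w k * c :=
        Finset.sum_le_sum (fun k hk => mul_le_mul_of_nonneg_left (hf k hk) (hw k hk))
    _ = (∑ k ∈ s, w k) * c := by rw [← Finset.sum_mul]
    _ ≤ d * c := mul_le_mul_of_nonneg_right hs hc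
    _ = c * d := mul_comm _ _

lemma upper_bound (n m : ℕ) (P δ b α θ : ℝ) (h0 : 0 < P) (h1 : P < 1) (hb : 0 < b)
    (hα : 0 < α) (hδ0 : 0 < δ) (hδ1 : δ < 1) (hθ0 : 0 < θ)
    (hM1 : 1 ≤ (n:ℝ)*P) (hMθ : (m:ℝ) ≤ ((n:ℝ)*P)^θ) :
    ((n:ℝ)*P)^α * ∑ k ∈ range (n+1), W n P k * (1/(b+(k:ℝ))^α)
      ≤ (1-δ)^(-α) + ((n:ℝ)*P)^(α-θ*α-1)/δ^2
        + b^(-α) * 2^m * ((n:ℝ)*P)^(α+θ*(m:ℝ)-(m:ℝ)) := by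
  have hn1 : 1 ≤ n := by
    by_contra h
    have hn0 : n = 0 := by omega
    subst hn0
    simp at hM1; linarith
  set M := (n:ℝ)*P with hMdef
  have hM0 : (0:ℝ) < M := lt_of_lt_of_le one_pos hM1
  have h1δ : (0:ℝ) < 1 - δ := by linarith
  have hθM : (0:ℝ) < M^θ := Real.rpow_pos_of_pos hM0 θ
  have hWnn : ∀ k ∈ range (n+1), 0 ≤ W n P k := fun k _ => W_nonneg n P h0.le h1.le k
  -- value bound helper
  have hval : ∀ (t : ℝ), 0 < t → ∀ k : ℕ, t ≤ b + (k:ℝ) → 1/(b+(k:ℝ))^α ≤ t^(-α) := by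
    intro t ht k hk
    rw [Real.rpow_neg ht.le, ← one_div]
    apply div_le_div_of_nonneg_left one_pos.le (Real.rpow_pos_of_pos ht α)
    exact Real.rpow_le_rpow ht.le hk hα.le
  -- split
  set A := (range (n+1)).filter (fun k : ℕ => (1-δ)*M ≤ (k:ℝ)) with hA
  set A' := (range (n+1)).filter (fun k : ℕ => ¬((1-δ)*M ≤ (k:ℝ))) with hA'
  set B := A'.filter (fun k : ℕ => M^θ ≤ (k:ℝ)) with hB
  set C := A'.filter (fun k : ℕ => ¬(M^θ ≤ (k:ℝ))) with hC
  have hsplit : ∑ k ∈ range (n+1), W n P k * (1/(b+(k:ℝ))^α)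
      = (∑ k ∈ A, W n P k * (1/(b+(k:ℝ))^α))
        + ((∑ k ∈ B, W n P k * (1/(b+(k:ℝ))^α))
          + (∑ k ∈ C, W n P k * (1/(b+(k:ℝ))^α))) := by
    have e1 : ∑ k ∈ range (n+1), W n P k * (1/(b+(k:ℝ))^α)
        = (∑ k ∈ A, W n P k * (1/(b+(k:ℝ))^α)) + (∑ k ∈ A', W n P k * (1/(b+(k:ℝ))^α)) := by
      rw [hA, hA']
      exact (Finset.sum_filter_add_sum_filter_not (range (n+1)) _ _).symm
    have e2 : ∑ k ∈ A', W n P k * (1/(b+(k:ℝ))^α)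
        = (∑ k ∈ B, W n P k * (1/(b+(k:ℝ))^α)) + (∑ k ∈ C, W n P k * (1/(b+(k:ℝ))^α)) := by
      rw [hB, hC]
      exact (Finset.sum_filter_add_sum_filter_not A' _ _).symm
    rw [e1, e2]
  have hAsub : A ⊆ range (n+1) := Finset.filter_subset _ _
  have hA'sub : A' ⊆ range (n+1) := Finset.filter_subset _ _
  have hBsub : B ⊆ range (n+1) := (Finset.filter_subset _ _).trans hA'sub
  have hCsub : C ⊆ range (n+1) := (Finset.filter_subset _ _).trans hA'sub
  -- region A
  have boundA : ∑ k ∈ A, W n P k * (1/(b+(k:ℝ))^α) ≤ ((1-δ)*M)^(-α) * 1 := by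
    apply sum_w_mul_le (fun k hk => hWnn k (hAsub hk))
    · intro k hk
      have h2 := (Finset.mem_filter.mp hk).2
      exact hval _ (by positivity) k (by linarith)
    · exact (Real.rpow_pos_of_pos (by positivity) _).le
    · exact W_sum_le_one n P h0.le h1.le A hAsub
  -- region B
  have boundB : ∑ k ∈ B, W n P k * (1/(b+(k:ℝ))^α) ≤ (M^θ)^(-α) * (1/(δ^2*M)) := by
    apply sum_w_mul_le (fun k hk => hWnn k (hBsub hk))
    · intro k hk
      have h2 := (Finset.mem_filter.mp hk).2
      exact hval _ hθM k (by linarith)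
    · exact (Real.rpow_pos_of_pos hθM _).le
    · apply cheb n P δ h0 h1 hδ0 hM0 B hBsub
      intro k hk
      have h2 : ¬((1-δ)*M ≤ (k:ℝ)) := (Finset.mem_filter.mp ((Finset.filter_subset _ _) hk : k ∈ A')).2
      push_neg at h2
      rw [← hMdef]
      have h3 : δ*M < M - (k:ℝ) := by linarith
      nlinarith [mul_pos hδ0 hM0, h3]
  -- region C
  have hF3 := F3 n m P h0 h1.le hn1
  have boundCW : ∑ k ∈ C, W n P k ≤ (M^θ+m)^m * (1/M^m) := by
    have hterm : ∀ k ∈ C, W n P k ≤ (M^θ+m)^m * (W n P k * ((k.factorial : ℝ)/(k+m).factorial)) := by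
      intro k hk
      have hkC : ¬(M^θ ≤ (k:ℝ)) := (Finset.mem_filter.mp hk).2
      push_neg at hkC
      have hfact : ((k+m).factorial : ℝ) ≤ (k.factorial : ℝ) * ((k:ℝ)+m)^m := by
        have := fact_add_le k m
        calc ((k+m).factorial : ℝ) ≤ ((k.factorial * (k+m)^m : ℕ) : ℝ) := by exact_mod_cast this
          _ = (k.factorial : ℝ) * ((k:ℝ)+(m:ℝ))^m := by push_cast; ring
      have hpow : ((k:ℝ)+m)^m ≤ (M^θ+m)^m := by
        apply pow_le_pow_left₀ (by positivity) (by linarith)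
      have hfp : (0:ℝ) < ((k+m).factorial : ℝ) := by exact_mod_cast Nat.factorial_pos _
      have hfp2 : (0:ℝ) < (k.factorial : ℝ) := by exact_mod_cast Nat.factorial_pos _
      have hWk := W_nonneg n P h0.le h1.le k
      have key : 1 ≤ (M^θ+m)^m * ((k.factorial : ℝ)/(k+m).factorial) := by
        rw [← mul_div_assoc, le_div_iff₀ hfp, one_mul]
        calc ((k+m).factorial : ℝ) ≤ (k.factorial : ℝ) * ((k:ℝ)+m)^m := hfact
          _ ≤ (k.factorial : ℝ) * (M^θ+m)^m := by
              apply mul_le_mul_of_nonneg_left hpow hfp2.le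
          _ = (M^θ+m)^m * (k.factorial : ℝ) := mul_comm _ _
        
      calc W n P k = W n P k * 1 := (mul_one _).symm
        _ ≤ W n P k * ((M^θ+m)^m * ((k.factorial : ℝ)/(k+m).factorial)) :=
            mul_le_mul_of_nonneg_left key hWk
        _ = (M^θ+m)^m * (W n P k * ((k.factorial : ℝ)/(k+m).factorial)) := by ring
    calc ∑ k ∈ C, W n P k
        ≤ ∑ k ∈ C, (M^θ+m)^m * (W n P k * ((k.factorial : ℝ)/(k+m).factorial)) :=
          Finset.sum_le_sum hterm
      _ ≤ ∑ k ∈ range (n+1), (M^θ+m)^m * (W n P k * ((k.factorial : ℝ)/(k+m).factorial)) := by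
          apply Finset.sum_le_sum_of_subset_of_nonneg hCsub
          intro k hk _
          have := W_nonneg n P h0.le h1.le k
          have h2 : (0:ℝ) ≤ (k.factorial : ℝ)/(k+m).factorial := by positivity
          positivity
      _ = (M^θ+m)^m * ∑ k ∈ range (n+1), W n P k * ((k.factorial : ℝ)/(k+m).factorial) := by
          rw [Finset.mul_sum]
      _ ≤ (M^θ+m)^m * (1/M^m) := by
          apply mul_le_mul_of_nonneg_left hF3 (by positivity)
  have boundC : ∑ k ∈ C, W n P k * (1/(b+(k:ℝ))^α) ≤ b^(-α) * ((2*M^θ)^m * (1/M^m)) := by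
    apply sum_w_mul_le (fun k hk => hWnn k (hCsub hk))
    · intro k hk
      exact hval b hb k (le_add_of_nonneg_right (Nat.cast_nonneg k))
    · exact (Real.rpow_pos_of_pos hb _).le
    · calc ∑ k ∈ C, W n P k ≤ (M^θ+m)^m * (1/M^m) := boundCW
        _ ≤ (2*M^θ)^m * (1/M^m) := by
            apply mul_le_mul_of_nonneg_right _ (by positivity)
            apply pow_le_pow_left₀ (by positivity) (by linarith)
  have hMα : (0:ℝ) ≤ M^α := (Real.rpow_pos_of_pos hM0 α).le
  have eqA : M^α * (((1-δ)*M)^(-α) * 1) = (1-δ)^(-α) := by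
    rw [mul_one, Real.mul_rpow h1δ.le hM0.le, Real.rpow_neg hM0.le]
    field_simp
  have eqB : M^α * ((M^θ)^(-α) * (1/(δ^2*M))) = M^(α-θ*α-1)/δ^2 := by
    have h5 : M ≠ 0 := ne_of_gt hM0
    calc M^α * ((M^θ)^(-α) * (1/(δ^2*M)))
        = (M^α * (M^θ)^(-α) * M⁻¹)/δ^2 := by field_simp
      _ = (M^α * M^(θ*(-α)) * M^(-1:ℝ))/δ^2 := by
          rw [← Real.rpow_mul hM0.le, Real.rpow_neg_one]
      _ = M^(α+θ*(-α)+(-1:ℝ))/δ^2 := by rw [← Real.rpow_add hM0, ← Real.rpow_add hM0]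
      _ = M^(α-θ*α-1)/δ^2 := by rw [show α+θ*(-α)+(-1:ℝ) = α-θ*α-1 by ring]
  have eqC : M^α * (b^(-α) * ((2*M^θ)^m * (1/M^m))) = b^(-α) * 2^m * M^(α+θ*(m:ℝ)-(m:ℝ)) := by
    have h5 : (M:ℝ)^(m:ℕ) ≠ 0 := by positivity
    calc M^α * (b^(-α) * ((2*M^θ)^m * (1/M^m)))
        = b^(-α) * 2^m * (M^α * ((M^θ)^m * (M^(m:ℕ))⁻¹)) := by rw [mul_pow]; field_simp
      _ = b^(-α) * 2^m * (M^α * (M^(θ*(m:ℝ)) * M^(-(m:ℝ)))) := by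
          rw [← Real.rpow_natCast (M^θ) m, ← Real.rpow_mul hM0.le,
            ← Real.rpow_natCast M m, ← Real.rpow_neg hM0.le]
      _ = b^(-α) * 2^m * M^(α+(θ*(m:ℝ)+(-(m:ℝ)))) := by
          rw [← Real.rpow_add hM0, ← Real.rpow_add hM0]
      _ = b^(-α) * 2^m * M^(α+θ*(m:ℝ)-(m:ℝ)) := by
          rw [show α+(θ*(m:ℝ)+(-(m:ℝ))) = α+θ*(m:ℝ)-(m:ℝ) by ring]
  rw [hsplit]
  calc M^α * ((∑ k ∈ A, W n P k * (1/(b+(k:ℝ))^α))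
        + ((∑ k ∈ B, W n P k * (1/(b+(k:ℝ))^α)) + (∑ k ∈ C, W n P k * (1/(b+(k:ℝ))^α))))
      = M^α * (∑ k ∈ A, W n P k * (1/(b+(k:ℝ))^α))
        + M^α * (∑ k ∈ B, W n P k * (1/(b+(k:ℝ))^α))
        + M^α * (∑ k ∈ C, W n P k * (1/(b+(k:ℝ))^α)) := by ring
    _ ≤ M^α * (((1-δ)*M)^(-α) * 1) + M^α * ((M^θ)^(-α) * (1/(δ^2*M)))
        + M^α * (b^(-α) * ((2*M^θ)^m * (1/M^m))) := by
        exact add_le_add (add_le_add (mul_le_mul_of_nonneg_left boundA hMα)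
          (mul_le_mul_of_nonneg_left boundB hMα)) (mul_le_mul_of_nonneg_left boundC hMα)
    _ = (1-δ)^(-α) + M^(α-θ*α-1)/δ^2 + b^(-α) * 2^m * M^(α+θ*(m:ℝ)-(m:ℝ)) := by
        rw [eqA, eqB, eqC]

lemma integral_eq_sum_s8 (n : ℕ) (P : ℝ) (h0 : 0 < P) (h1 : P < 1) (μ : Measure ℕ)
    (hprob : IsProbabilityMeasure μ) (hμ : ∀ k : ℕ, μ {k} = ENNReal.ofReal (W n P k))
    (b α : ℝ) (hb : 0 < b) (hα : 0 < α) :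
    ∫ x, 1 / (b + (x : ℝ)) ^ α ∂μ = ∑ k ∈ range (n+1), W n P k * (1 / (b + (k:ℝ)) ^ α) := by
  have hfm : ∀ k : ℕ, (0:ℝ) < (b + (k:ℝ)) ^ α := fun k =>
    Real.rpow_pos_of_pos (by positivity) α
  have hbound : ∀ k : ℕ, ‖1 / (b + (k:ℝ)) ^ α‖ ≤ 1 / b ^ α := by
    intro k
    rw [Real.norm_eq_abs, abs_of_pos (by positivity)]
    apply div_le_div_of_nonneg_left one_pos.le (Real.rpow_pos_of_pos hb α)
    exact Real.rpow_le_rpow hb.le (le_add_of_nonneg_right (Nat.cast_nonneg k)) hα.le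
  have hint : Integrable (fun x : ℕ => 1 / (b + (x : ℝ)) ^ α) μ := by
    apply (integrable_const (1 / b ^ α)).mono'
      (measurable_of_countable _).aestronglyMeasurable
    exact Filter.Eventually.of_forall hbound
  rw [MeasureTheory.integral_countable' hint]
  have hterm : ∀ k : ℕ, (μ {k}).toReal • (1 / (b + (k:ℝ)) ^ α)
      = W n P k * (1 / (b + (k:ℝ)) ^ α) := by
    intro k
    rw [hμ k, ENNReal.toReal_ofReal (W_nonneg n P h0.le h1.le k), smul_eq_mul]
  simp only [measureReal_def]
  rw [tsum_congr hterm]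
  apply tsum_eq_sum
  intro k hk
  have : n < k := by simpa using hk
  simp [W, Nat.choose_eq_zero_of_lt this]

lemma lower_bound (n : ℕ) (P δ b α : ℝ) (h0 : 0 < P) (h1 : P < 1) (hb : 0 < b)
    (hα : 0 < α) (hδ0 : 0 < δ) (hM1 : 1 ≤ (n:ℝ)*P) :
    (((n:ℝ)*P)/(b+(1+δ)*((n:ℝ)*P)))^α * (1 - 1/(δ^2*((n:ℝ)*P)))
      ≤ ((n:ℝ)*P)^α * ∑ k ∈ range (n+1), W n P k * (1/(b+(k:ℝ))^α) := by
  set M := (n:ℝ)*P with hMdef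
  have hM0 : (0:ℝ) < M := lt_of_lt_of_le one_pos hM1
  have ht0 : (0:ℝ) < b+(1+δ)*M := by positivity
  set D := (range (n+1)).filter (fun k : ℕ => (k:ℝ) ≤ (1+δ)*M) with hD
  have hDsub : D ⊆ range (n+1) := Finset.filter_subset _ _
  have hWnn : ∀ k, 0 ≤ W n P k := W_nonneg n P h0.le h1.le
  -- tail bound
  have htail : ∑ k ∈ (range (n+1)).filter (fun k : ℕ => ¬((k:ℝ) ≤ (1+δ)*M)), W n P k
      ≤ 1/(δ^2*M) := by
    apply cheb n P δ h0 h1 hδ0 hM0 _ (Finset.filter_subset _ _)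
    intro k hk
    have h2 := (Finset.mem_filter.mp hk).2
    push_neg at h2
    rw [← hMdef]
    have h3 : δ*M < (k:ℝ) - M := by linarith
    nlinarith [mul_pos hδ0 hM0, h3]
  have hDsum : 1 - 1/(δ^2*M) ≤ ∑ k ∈ D, W n P k := by
    have := Finset.sum_filter_add_sum_filter_not (range (n+1)) (fun k : ℕ => (k:ℝ) ≤ (1+δ)*M)
      (W n P)
    rw [W_sum_one n P] at this
    -- this : ΣD + Σtail = 1
    rw [← hD] at this
    linarith
  -- value bound on D
  have hvalD : ∀ k ∈ D, (b+(1+δ)*M)^(-α) ≤ 1/(b+(k:ℝ))^α := by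
    intro k hk
    have h2 := (Finset.mem_filter.mp hk).2
    rw [Real.rpow_neg ht0.le, ← one_div]
    apply div_le_div_of_nonneg_left one_pos.le (Real.rpow_pos_of_pos (by positivity) α)
    exact Real.rpow_le_rpow (by positivity) (by linarith) hα.le
  have hstep : (b+(1+δ)*M)^(-α) * (1 - 1/(δ^2*M))
      ≤ ∑ k ∈ range (n+1), W n P k * (1/(b+(k:ℝ))^α) := by
    have hc : (0:ℝ) ≤ (b+(1+δ)*M)^(-α) := (Real.rpow_pos_of_pos ht0 _).le
    calc (b+(1+δ)*M)^(-α) * (1 - 1/(δ^2*M))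
        ≤ (b+(1+δ)*M)^(-α) * ∑ k ∈ D, W n P k := mul_le_mul_of_nonneg_left hDsum hc
      _ = ∑ k ∈ D, W n P k * (b+(1+δ)*M)^(-α) := by rw [Finset.mul_sum]; congr 1; ext k; ring
      _ ≤ ∑ k ∈ D, W n P k * (1/(b+(k:ℝ))^α) :=
          Finset.sum_le_sum (fun k hk => mul_le_mul_of_nonneg_left (hvalD k hk) (hWnn k))
      _ ≤ ∑ k ∈ range (n+1), W n P k * (1/(b+(k:ℝ))^α) := by
          apply Finset.sum_le_sum_of_subset_of_nonneg hDsub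
          intro k _ _
          exact mul_nonneg (hWnn k) (by positivity)
  have heq : (M/(b+(1+δ)*M))^α = M^α * (b+(1+δ)*M)^(-α) := by
    rw [Real.div_rpow hM0.le ht0.le, Real.rpow_neg ht0.le, div_eq_mul_inv]
  calc (M/(b+(1+δ)*M))^α * (1 - 1/(δ^2*M))
      = M^α * ((b+(1+δ)*M)^(-α) * (1 - 1/(δ^2*M))) := by rw [heq]; ring
    _ ≤ M^α * ∑ k ∈ range (n+1), W n P k * (1/(b+(k:ℝ))^α) :=
        mul_le_mul_of_nonneg_left hstep (Real.rpow_pos_of_pos hM0 α).le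

/-- If `X_n ~ Bin(n, p_n)` with `n p_n → ∞`, then for fixed `b > 0` and `α > 0`,
`E[1/(b + X_n)^α] = (1 + o(1))/(n p_n)^α`, i.e. `(n p_n)^α E[1/(b + X_n)^α] → 1`. -/
theorem binomial_inverse_moment_asymptotic (p : ℕ → ℝ) (hp : ∀ n, p n ∈ Set.Ioo (0 : ℝ) 1)
    (μ : ℕ → Measure ℕ) (hμ : ∀ n, IsBinomial (μ n) n (p n))
    (hnp : Tendsto (fun n : ℕ => (n : ℝ) * p n) atTop atTop)
    (b α : ℝ) (hb : 0 < b) (hα : 0 < α) :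
    Tendsto (fun n : ℕ =>
        ((n : ℝ) * p n) ^ α * ∫ x, 1 / (b + (x : ℝ)) ^ α ∂(μ n))
      atTop (nhds 1) := by
  have hrw : (fun n : ℕ => ((n : ℝ) * p n) ^ α * ∫ x, 1 / (b + (x : ℝ)) ^ α ∂(μ n))
      = (fun n : ℕ => ((n : ℝ) * p n) ^ α
          * ∑ k ∈ range (n+1), W n (p n) k * (1 / (b + (k:ℝ)) ^ α)) := by
    funext n
    rw [integral_eq_sum_s8 n (p n) (hp n).1 (hp n).2 (μ n) (hμ n).1 (hμ n).2 b α hb hα]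
  rw [hrw]
  set M := fun n : ℕ => (n:ℝ) * p n with hM
  have hM1 : ∀ᶠ n in atTop, 1 ≤ M n := hnp.eventually_ge_atTop 1
  rw [tendsto_order]
  constructor
  · -- lower bound branch
    intro a ha
    -- pick δ > 0 with a < (1/(1+δ))^α
    obtain ⟨δ, hδa, hδ0⟩ : ∃ δ : ℝ, a < (1/(1+δ))^α ∧ 0 < δ := by
      have hc : ContinuousAt (fun t : ℝ => (1/(1+t))^α) 0 := by
        apply ContinuousAt.comp (f := fun t : ℝ => 1/(1+t)) (g := fun s : ℝ => s^α)
        · simpa using Real.continuousAt_rpow_const 1 α (Or.inl one_ne_zero)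
        · apply ContinuousAt.div continuousAt_const (by fun_prop)
          norm_num
      have hval : (fun t : ℝ => (1/(1+t))^α) 0 = 1 := by norm_num
      have ht : Tendsto (fun t : ℝ => (1/(1+t))^α) (nhdsWithin 0 (Set.Ioi 0)) (nhds 1) := by
        have h := (hc.continuousWithinAt (s := Set.Ioi (0:ℝ))).tendsto
        simpa using h
      have h2 : ∀ᶠ t in nhdsWithin (0:ℝ) (Set.Ioi 0), a < (1/(1+t))^α :=
        ht.eventually (eventually_gt_nhds ha)
      have h3 : ∀ᶠ t in nhdsWithin (0:ℝ) (Set.Ioi 0), 0 < t :=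
        eventually_mem_nhdsWithin.mono (fun t ht => ht)
      exact (h2.and h3).exists
    -- limit of the lower bound expression
    have hq : Tendsto (fun n => M n / (b + (1+δ) * M n)) atTop (nhds (1/(1+δ))) := by
      have hb0 : Tendsto (fun n => b / M n) atTop (nhds 0) :=
        tendsto_const_nhds.div_atTop hnp
      have h2 : Tendsto (fun n => 1 / (b / M n + (1+δ))) atTop (nhds (1/(0+(1+δ)))) := by
        apply tendsto_const_nhds.div (hb0.add tendsto_const_nhds)
        positivity
      rw [show (1:ℝ)/(0+(1+δ)) = 1/(1+δ) by norm_num] at h2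
      apply h2.congr'
      filter_upwards [hM1] with n hn
      have hMn : (0:ℝ) < M n := lt_of_lt_of_le one_pos hn
      have : (0:ℝ) < b + (1+δ) * M n := by positivity
      field_simp
    have hrp : Tendsto (fun n => (M n / (b + (1+δ) * M n))^α) atTop (nhds ((1/(1+δ))^α)) := by
      have hc : ContinuousAt (fun s : ℝ => s^α) (1/(1+δ)) :=
        Real.continuousAt_rpow_const _ α (Or.inl (by positivity))
      exact hc.tendsto.comp hq
    have hone : Tendsto (fun n => 1 - 1/(δ^2 * M n)) atTop (nhds 1) := by
      have h2 : Tendsto (fun n => δ^2 * M n) atTop atTop :=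
        hnp.const_mul_atTop (by positivity)
      have h3 : Tendsto (fun n => 1/(δ^2 * M n)) atTop (nhds 0) :=
        tendsto_const_nhds.div_atTop h2
      simpa using tendsto_const_nhds.sub h3
    have hL : Tendsto (fun n => (M n / (b + (1+δ) * M n))^α * (1 - 1/(δ^2 * M n)))
        atTop (nhds ((1/(1+δ))^α)) := by
      simpa using hrp.mul hone
    filter_upwards [hM1, hL.eventually (eventually_gt_nhds hδa)] with n hn hLn
    calc a < (M n / (b + (1+δ) * M n))^α * (1 - 1/(δ^2 * M n)) := hLn
      _ ≤ _ := lower_bound n (p n) δ b α (hp n).1 (hp n).2 hb hα hδ0 hn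
  · -- upper bound branch
    intro a ha
    obtain ⟨δ, hδa, hδ0, hδ1⟩ : ∃ δ : ℝ, (1-δ)^(-α) < a ∧ 0 < δ ∧ δ < 1 := by
      have hc : ContinuousAt (fun t : ℝ => (1-t)^(-α)) 0 := by
        apply ContinuousAt.comp (f := fun t : ℝ => 1-t) (g := fun s : ℝ => s^(-α))
        · simpa using Real.continuousAt_rpow_const 1 (-α) (Or.inl one_ne_zero)
        · fun_prop
      have hval : (fun t : ℝ => (1-t)^(-α)) 0 = 1 := by norm_num
      have ht : Tendsto (fun t : ℝ => (1-t)^(-α)) (nhdsWithin 0 (Set.Ioi 0)) (nhds 1) := by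
        have h := (hc.continuousWithinAt (s := Set.Ioi (0:ℝ))).tendsto
        simpa using h
      have h2 : ∀ᶠ t in nhdsWithin (0:ℝ) (Set.Ioi 0), (1-t)^(-α) < a :=
        ht.eventually (eventually_lt_nhds ha)
      have h3 : ∀ᶠ t in nhdsWithin (0:ℝ) (Set.Ioi 0), 0 < t :=
        eventually_mem_nhdsWithin.mono (fun t ht => ht)
      have h4 : ∀ᶠ t in nhdsWithin (0:ℝ) (Set.Ioi 0), t < 1 :=
        eventually_nhdsWithin_of_eventually_nhds (eventually_lt_nhds one_pos)
      obtain ⟨δ, hδ⟩ := ((h2.and h3).and h4).exists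
      exact ⟨δ, hδ.1.1, hδ.1.2, hδ.2⟩
    set θ : ℝ := 1 - 1/(2*(α+1)) with hθ
    set m : ℕ := ⌈2*(α+1)^2⌉₊ with hm
    have hα1 : (0:ℝ) < 2*(α+1) := by linarith
    have hθ0 : 0 < θ := by
      rw [hθ]
      have : 1/(2*(α+1)) < 1 := by
        rw [div_lt_one hα1]; linarith
      linarith
    have hmge : 2*(α+1)^2 ≤ (m:ℝ) := Nat.le_ceil _
    have he1 : α - θ*α - 1 < 0 := by
      rw [hθ]
      have h7 : α * (1/(2*(α+1))) < 1 := by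
        rw [mul_one_div, div_lt_one hα1]; linarith
      nlinarith [h7]
    have he2 : α + θ*(m:ℝ) - (m:ℝ) < 0 := by
      rw [hθ]
      have h8 : (α+1) ≤ (m:ℝ)*(1/(2*(α+1))) := by
        rw [mul_one_div, le_div_iff₀ hα1]; nlinarith [hmge]
      nlinarith [h8]
    have hMθev : ∀ᶠ n in atTop, (m:ℝ) ≤ (M n)^θ :=
      ((tendsto_rpow_atTop hθ0).comp hnp).eventually_ge_atTop (m:ℝ)
    have hneg : ∀ e : ℝ, e < 0 → Tendsto (fun n => (M n)^e) atTop (nhds 0) := by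
      intro e he
      have h9 := (tendsto_rpow_neg_atTop (y := -e) (by linarith)).comp hnp
      simpa [Function.comp_def] using h9
    have hU : Tendsto (fun n => (1-δ)^(-α) + (M n)^(α-θ*α-1)/δ^2
        + b^(-α)*2^m*(M n)^(α+θ*(m:ℝ)-(m:ℝ))) atTop
        (nhds ((1-δ)^(-α) + 0/δ^2 + b^(-α)*2^m*0)) :=
      (tendsto_const_nhds.add ((hneg _ he1).div_const _)).add
        (tendsto_const_nhds.mul (hneg _ he2))
    rw [show (1-δ)^(-α) + 0/δ^2 + b^(-α)*2^m*0 = (1-δ)^(-α) by ring] at hU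
    filter_upwards [hM1, hMθev, hU.eventually (eventually_lt_nhds hδa)] with n h1n h2n h3n
    calc ((n:ℝ)*p n)^α * ∑ k ∈ range (n+1), W n (p n) k * (1/(b+(k:ℝ))^α)
        ≤ (1-δ)^(-α) + (M n)^(α-θ*α-1)/δ^2 + b^(-α)*2^m*(M n)^(α+θ*(m:ℝ)-(m:ℝ)) :=
          upper_bound n m (p n) δ b α θ (hp n).1 (hp n).2 hb hα hδ0 hδ1 hθ0 h1n h2n
      _ < a := h3n
end

section
/- If n(1-p) → c for a constant c > 0, then n(1 − J_ij) converges in distribution to a Poisson random variable with parameter 2c, where J_ij is the Jaccard index of a fixed pair of distinct vertices in G(n,p). -/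
open MeasureTheory ProbabilityTheory Filter
open scoped ENNReal
open Fin.NatCast

section helpers
open Finset

lemma sum_prod_eq_pow {A K : Type*} [Fintype A] [Fintype K] [DecidableEq K] (q : A → ℝ) :
    ∑ u : K → A, ∏ k, q (u k) = (∑ a, q a) ^ Fintype.card K := by
  rw [← Fintype.piFinset_univ, ← Finset.prod_univ_sum (fun _ : K => (univ : Finset A)) (fun _ a => q a)]
  rw [Finset.prod_const, Finset.card_univ]

lemma sum_restrict {A K : Type*} [Fintype A] [Fintype K] [DecidableEq K] [DecidableEq A]
    (P : A → Prop) [DecidablePred P] (F : (K → A) → ℝ) :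
    ∑ u : K → A, (if ∀ k, P (u k) then F u else 0)
      = ∑ u : K → {a // P a}, F (fun k => (u k : A)) := by
  classical
  rw [← Finset.sum_filter]
  rw [Finset.sum_subtype (univ.filter fun u : K → A => ∀ k, P (u k))
    (p := fun u : K → A => ∀ k, P (u k)) (by simp)]
  exact (Fintype.sum_equiv
    (Equiv.subtypePiEquivPi (α := K) (β := fun _ => A) (p := fun _ a => P a))
    (fun v => F v.1) (fun u => F (fun k => (u k : A))) (fun v => rfl))

lemma card_boolfun_count {K : Type*} [Fintype K] [DecidableEq K] (d : ℕ) :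
    (univ.filter fun b : K → Bool => (univ.filter fun k => b k = true).card = d).card
      = (Fintype.card K).choose d := by
  rw [← Finset.card_univ (α := K), ← Finset.card_powersetCard d (univ : Finset K)]
  apply Finset.card_bij (fun b _ => univ.filter fun k => b k = true)
  · intro b hb
    simp only [mem_filter, mem_univ, true_and] at hb
    simpa [Finset.mem_powersetCard_univ] using hb
  · intro b hb b' hb' hh
    funext k
    have := Finset.ext_iff.1 hh k
    simp only [mem_filter, mem_univ, true_and] at this
    by_cases h1 : b k <;> by_cases h2 : b' k <;> simp_all
  · intro A hA
    refine ⟨fun k => decide (k ∈ A), ?_, ?_⟩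
    · simp only [mem_filter, mem_univ, true_and]
      rw [Finset.mem_powersetCard_univ] at hA
      rw [← hA]
      congr 1
      ext k; simp
    · ext k; simp

lemma sum_count_eq_binom {A K : Type*} [Fintype A] [Fintype K] [DecidableEq K] [DecidableEq A]
    (q : A → ℝ) (P : A → Prop) [DecidablePred P] (d : ℕ) :
    ∑ u : K → A, (if (univ.filter fun k => P (u k)).card = d then ∏ k, q (u k) else 0)
      = (Fintype.card K).choose d * (∑ a ∈ univ.filter fun a => P a, q a) ^ d
          * (∑ a ∈ univ.filter fun a => ¬ P a, q a) ^ (Fintype.card K - d) := by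
  classical
  set Wt : ℝ := ∑ a ∈ univ.filter fun a => P a, q a with hWt
  set Wf : ℝ := ∑ a ∈ univ.filter fun a => ¬ P a, q a with hWf
  rw [← Finset.sum_fiberwise_of_maps_to
    (g := fun u : K → A => fun k => decide (P (u k))) (t := (univ : Finset (K → Bool)))
    (fun x _ => mem_univ _)]
  have key : ∀ b : K → Bool,
      ∑ u ∈ univ.filter (fun u : K → A => (fun k => decide (P (u k))) = b),
        (if (univ.filter fun k => P (u k)).card = d then ∏ k, q (u k) else 0)
      = if (univ.filter fun k => b k = true).card = d
          then Wt ^ d * Wf ^ (Fintype.card K - d) else 0 := by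
    intro b
    have hfib : univ.filter (fun u : K → A => (fun k => decide (P (u k))) = b)
        = Fintype.piFinset (fun k => univ.filter fun a => decide (P a) = b k) := by
      ext u
      simp [Fintype.mem_piFinset, funext_iff]
    by_cases hcard : (univ.filter fun k => b k = true).card = d
    · rw [if_pos hcard]
      have : ∀ u ∈ univ.filter (fun u : K → A => (fun k => decide (P (u k))) = b),
          (if (univ.filter fun k => P (u k)).card = d then ∏ k, q (u k) else 0)
            = ∏ k, q (u k) := by
        intro u hu
        simp only [mem_filter, mem_univ, true_and] at hu
        rw [if_pos]
        rw [← hcard]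
        congr 1
        ext k
        have := congrFun hu k
        simp only [mem_filter, mem_univ, true_and]
        constructor
        · intro hp; rw [← this]; simpa
        · intro hb; rw [← this] at hb; simpa using hb
      rw [Finset.sum_congr rfl this, hfib, ← Finset.prod_univ_sum]
      have : ∀ k, (∑ a ∈ univ.filter fun a => decide (P a) = b k, q a)
          = if b k then Wt else Wf := by
        intro k
        by_cases hb : b k <;> simp only [hb, if_true, if_false, hWt, hWf] <;>
          · congr 1; ext a; simp
      rw [Finset.prod_congr rfl (fun k _ => this k)]
      rw [← Finset.prod_filter_mul_prod_filter_not univ (fun k => b k = true)]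
      have e1 : ∀ k ∈ univ.filter (fun k => b k = true), (if b k then Wt else Wf) = Wt := by
        intro k hk; simp only [mem_filter] at hk; simp [hk.2]
      have e2 : ∀ k ∈ univ.filter (fun k => ¬ b k = true), (if b k then Wt else Wf) = Wf := by
        intro k hk; simp only [mem_filter] at hk; simp [hk.2]
      rw [Finset.prod_congr rfl e1, Finset.prod_congr rfl e2, Finset.prod_const,
        Finset.prod_const, hcard]
      congr 2
      have h2 := Finset.card_filter_add_card_filter_not
        (s := (univ : Finset K)) (p := fun k => b k = true)
      simp only [Finset.card_univ] at h2
      omega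
    · rw [if_neg hcard]
      apply Finset.sum_eq_zero
      intro u hu
      simp only [mem_filter, mem_univ, true_and] at hu
      rw [if_neg]
      intro hd
      apply hcard
      rw [← hd]
      congr 1
      ext k
      have := congrFun hu k
      simp only [mem_filter, mem_univ, true_and]
      constructor
      · intro hb; rw [← this] at hb; simpa using hb
      · intro hp; rw [← this]; simpa
  rw [Finset.sum_congr rfl (fun b _ => key b)]
  rw [Finset.sum_ite, Finset.sum_const_zero, add_zero, Finset.sum_const,
    card_boolfun_count, nsmul_eq_mul, mul_assoc]

lemma sum_marginal {E K : Type*} [Fintype E] [Fintype K] [DecidableEq E] [DecidableEq K]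
    (ψ : K → E) (hψ : Function.Injective ψ) (w : Bool → ℝ) (hw : w true + w false = 1)
    (h : (K → Bool) → ℝ) :
    ∑ ω : E → Bool, (∏ e, w (ω e)) * h (fun k => ω (ψ k))
      = ∑ v : K → Bool, (∏ k, w (v k)) * h v := by
  classical
  set p : E → Prop := fun e => ∃ k, ψ k = e with hp
  set eK : K ≃ {e // p e} := Equiv.ofBijective (fun k => ⟨ψ k, ⟨k, rfl⟩⟩)
    ⟨fun a b hab => hψ (congrArg Subtype.val hab),
     fun ⟨e, k, hk⟩ => ⟨k, Subtype.ext hk⟩⟩ with heK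
  set φ := (Equiv.piEquivPiSubtypeProd p (fun _ => Bool)).symm with hφ
  rw [← Equiv.sum_comp φ (fun ω => (∏ e, w (ω e)) * h (fun k => ω (ψ k)))]
  rw [Fintype.sum_prod_type]
  have key : ∀ (x : {e // p e} → Bool) (y : {e // ¬ p e} → Bool),
      (∏ e, w ((φ (x, y)) e)) * h (fun k => (φ (x, y)) (ψ k))
        = ((∏ e, w (x e)) * h (fun k => x ⟨ψ k, ⟨k, rfl⟩⟩)) * (∏ e, w (y e)) := by
    intro x y
    have hxy : ∀ e : E, (φ (x, y)) e = if he : p e then x ⟨e, he⟩ else y ⟨e, he⟩ := fun e => rfl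
    have h1 : (∏ e, w ((φ (x, y)) e)) = (∏ e : {e // p e}, w (x e)) * ∏ e : {e // ¬ p e}, w (y e) := by
      rw [← Fintype.prod_subtype_mul_prod_subtype p (fun e => w ((φ (x, y)) e))]
      congr 1
      · exact Finset.prod_congr rfl fun e _ => by rw [hxy]; rw [dif_pos e.2]
      · exact Finset.prod_congr rfl fun e _ => by rw [hxy]; rw [dif_neg e.2]
    have h2 : (fun k => (φ (x, y)) (ψ k)) = fun k => x ⟨ψ k, ⟨k, rfl⟩⟩ := by
      funext k
      rw [hxy, dif_pos (⟨k, rfl⟩)]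
    rw [h1, h2]; ring
  rw [Finset.sum_congr rfl fun x _ => Finset.sum_congr rfl fun y _ => key x y]
  have h3 : ∀ x : {e // p e} → Bool,
      ∑ y : {e // ¬ p e} → Bool,
        ((∏ e, w (x e)) * h (fun k => x ⟨ψ k, ⟨k, rfl⟩⟩)) * (∏ e, w (y e))
      = (∏ e, w (x e)) * h (fun k => x ⟨ψ k, ⟨k, rfl⟩⟩) := by
    intro x
    rw [← Finset.mul_sum, sum_prod_eq_pow]
    have : (∑ b, w b) = 1 := by rw [Fintype.sum_bool, hw]
    rw [this, one_pow, mul_one]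
  rw [Finset.sum_congr rfl fun x _ => h3 x]
  apply Fintype.sum_equiv (eK.arrowCongr (Equiv.refl Bool)).symm
  intro x
  congr 1
  · refine (Fintype.prod_equiv eK _ _ fun k => ?_).symm
    simp [Equiv.arrowCongr, Equiv.symm_symm, heK]

lemma log_one_sub_le {u : ℝ} (h1 : u < 1) : Real.log (1 - u) ≤ -u := by
  have := Real.log_le_sub_one_of_pos (x := 1 - u) (by linarith)
  linarith

lemma le_log_one_sub {u : ℝ} (h0 : 0 ≤ u) (h1 : u < 1) :
    -(u / (1 - u)) ≤ Real.log (1 - u) := by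
  have hpos : 0 < 1 - u := by linarith
  have h2 := Real.log_le_sub_one_of_pos (x := (1 - u)⁻¹) (by positivity)
  rw [Real.log_inv] at h2
  have h3 : (1 - u)⁻¹ - 1 = u / (1 - u) := by field_simp; ring
  linarith

lemma tendsto_one_sub_pow_exp (u : ℕ → ℝ) (t : ℝ)
    (h0 : ∀ᶠ n in atTop, 0 ≤ u n) (h1 : ∀ᶠ n in atTop, u n < 1)
    (ht : Tendsto (fun n : ℕ => (n : ℝ) * u n) atTop (nhds t)) (d : ℕ) :
    Tendsto (fun n => (1 - u n) ^ (n - d)) atTop (nhds (Real.exp (-t))) := by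
  have hu0 : Tendsto u atTop (nhds 0) := by
    have : Tendsto (fun n : ℕ => ((n : ℝ) * u n) * (n : ℝ)⁻¹) atTop (nhds (t * 0)) :=
      ht.mul tendsto_inv_atTop_nhds_zero_nat
    rw [mul_zero] at this
    apply this.congr'
    filter_upwards [eventually_gt_atTop 0] with n hn
    field_simp
  -- limit of n * log (1 - u n)
  have hlog : Tendsto (fun n : ℕ => (n : ℝ) * Real.log (1 - u n)) atTop (nhds (-t)) := by
    apply tendsto_of_tendsto_of_tendsto_of_le_of_le'
      (g := fun n : ℕ => -(((n : ℝ) * u n) / (1 - u n))) (h := fun n : ℕ => -((n : ℝ) * u n))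
    · have hden : Tendsto (fun n => 1 - u n) atTop (nhds 1) := by
        simpa using (tendsto_const_nhds (x := (1:ℝ))).sub hu0
      have := (ht.div hden one_ne_zero).neg
      simpa using this
    · exact ht.neg
    · filter_upwards [h0, h1] with n hn0 hn1
      have := le_log_one_sub hn0 hn1
      have hmul := mul_le_mul_of_nonneg_left this (Nat.cast_nonneg (α := ℝ) n)
      rw [mul_neg] at hmul
      calc -((n : ℝ) * u n / (1 - u n)) = (n : ℝ) * -(u n / (1 - u n)) := by ring
        _ ≤ (n : ℝ) * Real.log (1 - u n) := by
            apply mul_le_mul_of_nonneg_left (le_log_one_sub hn0 hn1) (Nat.cast_nonneg n)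
    · filter_upwards [h1] with n hn1
      calc (n : ℝ) * Real.log (1 - u n) ≤ (n : ℝ) * (-u n) :=
            mul_le_mul_of_nonneg_left (log_one_sub_le hn1) (Nat.cast_nonneg n)
        _ = -((n : ℝ) * u n) := by ring
  have hpown : Tendsto (fun n => (1 - u n) ^ n) atTop (nhds (Real.exp (-t))) := by
    have hcomp := (Real.continuous_exp.tendsto (-t)).comp hlog
    apply hcomp.congr'
    filter_upwards [h1] with n hn1
    have hpos : 0 < 1 - u n := by linarith
    simp only [Function.comp]
    rw [← Real.log_pow, Real.exp_log (by positivity)]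
  have hpowd : Tendsto (fun n => (1 - u n) ^ d) atTop (nhds 1) := by
    have hden : Tendsto (fun n => 1 - u n) atTop (nhds 1) := by
      simpa using (tendsto_const_nhds (x := (1:ℝ))).sub hu0
    simpa using hden.pow d
  have := hpown.div hpowd one_ne_zero
  rw [div_one] at this
  apply this.congr'
  filter_upwards [h1, eventually_ge_atTop d] with n hn1 hnd
  have hpos : (1 - u n) ≠ 0 := ne_of_gt (by linarith : (0:ℝ) < 1 - u n)
  simp only [Pi.div_apply]
  rw [pow_sub₀ _ hpos hnd, div_eq_mul_inv]

lemma scheffe (a : ℕ → ℕ → ℝ) (P : ℕ → ℝ) (g : ℕ → ℕ → ℝ) (G : ℕ → ℝ) (M : ℝ)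
    (ha : ∀ n d, 0 ≤ a n d)
    (hasum : ∀ n, ∑ d ∈ range (n+1), a n d ≤ 1)
    (haP : ∀ d, Tendsto (fun n => a n d) atTop (nhds (P d)))
    (hPs : Summable P) (hP1 : ∑' d, P d = 1)
    (hgM : ∀ n d, |g n d| ≤ M)
    (hGM : ∀ d, |G d| ≤ M)
    (hgG : ∀ d, Tendsto (fun n => g n d) atTop (nhds (G d))) :
    Tendsto (fun n => ∑ d ∈ range (n+1), a n d * g n d) atTop
      (nhds (∑' d, P d * G d)) := by
  have hP0 : ∀ d, 0 ≤ P d := fun d => le_of_tendsto_of_tendsto' tendsto_const_nhds (haP d)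
    (fun n => ha n d)
  have hM0 : 0 ≤ M := le_trans (abs_nonneg _) (hgM 0 0)
  have hPGs : Summable (fun d => P d * G d) := by
    apply Summable.of_abs
    apply Summable.of_nonneg_of_le (fun d => abs_nonneg _) _ (hPs.mul_right M)
    intro d
    rw [abs_mul, abs_of_nonneg (hP0 d)]
    exact mul_le_mul_of_nonneg_left (hGM d) (hP0 d)
  rw [Metric.tendsto_atTop]
  intro ε hε
  set ε' : ℝ := ε / (4 * (M + 1)) with hε'def
  have hM1 : (0:ℝ) < M + 1 := by linarith
  have hε' : 0 < ε' := by positivity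
  -- choose D
  have hpartial : Tendsto (fun D => ∑ d ∈ range D, P d) atTop (nhds 1) := by
    rw [← hP1]; exact hPs.hasSum.tendsto_sum_nat
  have hD : ∃ D, 1 - (∑ d ∈ range D, P d) < ε' := by
    rw [Metric.tendsto_atTop] at hpartial
    obtain ⟨D, hD⟩ := hpartial ε' hε'
    refine ⟨D, ?_⟩
    have := hD D le_rfl
    rw [Real.dist_eq, abs_sub_lt_iff] at this
    linarith [this.2]
  obtain ⟨D, hDε⟩ := hD
  have hheadP : ∑ d ∈ range D, P d ≤ 1 := by
    rw [← hP1]; exact hPs.sum_le_tsum (range D) (fun d _ => hP0 d)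
  -- tail of the limit
  have htailL : |(∑' d, P d * G d) - ∑ d ∈ range D, P d * G d| ≤ M * ε' := by
    have hsplit := hPGs.sum_add_tsum_nat_add D
    have hsplitP := hPs.sum_add_tsum_nat_add D
    have htailPsum : ∑' i, P (i + D) = 1 - ∑ d ∈ range D, P d := by
      rw [hP1] at hsplitP; linarith
    have h1 : (∑' d, P d * G d) - ∑ d ∈ range D, P d * G d = ∑' i, P (i + D) * G (i + D) := by
      linarith
    rw [h1]
    have hPtail : Summable (fun i => P (i + D)) := hPs.comp_injective (add_left_injective D)
    have hPGtail : Summable (fun i => P (i + D) * G (i + D)) :=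
      hPGs.comp_injective (add_left_injective D)
    have habs : Summable (fun i => |P (i + D) * G (i + D)|) := hPGtail.abs
    have habs' : Summable (fun i => ‖P (i + D) * G (i + D)‖) := by
      simpa only [Real.norm_eq_abs] using habs
    have step1 : |∑' i, P (i + D) * G (i + D)| ≤ ∑' i, |P (i + D) * G (i + D)| := by
      have := norm_tsum_le_tsum_norm habs'
      simpa only [Real.norm_eq_abs] using this
    have step2 : ∑' i, |P (i + D) * G (i + D)| ≤ ∑' i, P (i + D) * M := by
      apply Summable.tsum_le_tsum _ habs (hPtail.mul_right M)
      intro i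
      rw [abs_mul, abs_of_nonneg (hP0 _)]
      exact mul_le_mul_of_nonneg_left (hGM _) (hP0 _)
    have step3 : ∑' i, P (i + D) * M = (1 - ∑ d ∈ range D, P d) * M := by
      rw [tsum_mul_right, htailPsum]
    have step4 : (1 - ∑ d ∈ range D, P d) * M ≤ M * ε' := by nlinarith
    linarith
  -- eventual control
  have hHead : Tendsto (fun n => ∑ d ∈ range D, a n d * g n d) atTop
      (nhds (∑ d ∈ range D, P d * G d)) :=
    tendsto_finset_sum _ (fun d _ => (haP d).mul (hgG d))
  have hHeadA : Tendsto (fun n => ∑ d ∈ range D, a n d) atTop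
      (nhds (∑ d ∈ range D, P d)) := tendsto_finset_sum _ (fun d _ => haP d)
  rw [Metric.tendsto_atTop] at hHead hHeadA
  obtain ⟨N1, hN1⟩ := hHead ε' hε'
  obtain ⟨N2, hN2⟩ := hHeadA ε' hε'
  refine ⟨max (max N1 N2) D, fun n hn => ?_⟩
  have hnN1 : N1 ≤ n := le_trans (le_trans (le_max_left _ _) (le_max_left _ _)) hn
  have hnN2 : N2 ≤ n := le_trans (le_trans (le_max_right _ _) (le_max_left _ _)) hn
  have hnD : D ≤ n := le_trans (le_max_right _ _) hn
  -- split the sum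
  have hsplit : ∑ d ∈ range (n+1), a n d * g n d
      = (∑ d ∈ range D, a n d * g n d) + ∑ d ∈ Ico D (n+1), a n d * g n d := by
    rw [range_eq_Ico, range_eq_Ico]
    exact (Finset.sum_Ico_consecutive (fun d => a n d * g n d) (Nat.zero_le D) (show D ≤ n + 1 by omega)).symm
  have hsplitA : ∑ d ∈ range (n+1), a n d
      = (∑ d ∈ range D, a n d) + ∑ d ∈ Ico D (n+1), a n d := by
    rw [range_eq_Ico, range_eq_Ico]
    exact (Finset.sum_Ico_consecutive (fun d => a n d) (Nat.zero_le D) (show D ≤ n + 1 by omega)).symm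
  have hA := hN2 n hnN2
  rw [Real.dist_eq, abs_sub_lt_iff] at hA
  have htailA : ∑ d ∈ Ico D (n+1), a n d ≤ 2 * ε' := by
    have h1 := hasum n
    rw [hsplitA] at h1
    linarith [hA.2, hDε]
  have htailbound : |∑ d ∈ Ico D (n+1), a n d * g n d| ≤ M * (2 * ε') := by
    calc |∑ d ∈ Ico D (n+1), a n d * g n d| ≤ ∑ d ∈ Ico D (n+1), |a n d * g n d| :=
          Finset.abs_sum_le_sum_abs _ _
      _ ≤ ∑ d ∈ Ico D (n+1), a n d * M := by
          apply Finset.sum_le_sum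
          intro d _
          rw [abs_mul, abs_of_nonneg (ha n d)]
          exact mul_le_mul_of_nonneg_left (hgM n d) (ha n d)
      _ = (∑ d ∈ Ico D (n+1), a n d) * M := by rw [Finset.sum_mul]
      _ ≤ (2 * ε') * M := mul_le_mul_of_nonneg_right htailA hM0
      _ = M * (2 * ε') := mul_comm _ _
  have hh := hN1 n hnN1
  rw [Real.dist_eq] at hh
  rw [Real.dist_eq, hsplit]
  have : |(∑ d ∈ range D, a n d * g n d) + (∑ d ∈ Ico D (n+1), a n d * g n d) - ∑' d, P d * G d|
      ≤ |(∑ d ∈ range D, a n d * g n d) - ∑ d ∈ range D, P d * G d|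
        + |∑ d ∈ Ico D (n+1), a n d * g n d|
        + |(∑' d, P d * G d) - ∑ d ∈ range D, P d * G d| := by
    have := abs_sub_abs_le_abs_sub (0:ℝ) (0:ℝ)
    set x1 := ∑ d ∈ range D, a n d * g n d
    set x2 := ∑ d ∈ Ico D (n+1), a n d * g n d
    set y := ∑ d ∈ range D, P d * G d
    set L := ∑' d, P d * G d
    calc |x1 + x2 - L| = |(x1 - y) + x2 + (-(L - y))| := by ring_nf
      _ ≤ |(x1 - y) + x2| + |(-(L - y))| := abs_add_le _ _
      _ ≤ |x1 - y| + |x2| + |(-(L-y))| := by gcongr; exact abs_add_le _ _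
      _ = |x1 - y| + |x2| + |L - y| := by rw [abs_neg]
  calc |(∑ d ∈ range D, a n d * g n d) + (∑ d ∈ Ico D (n+1), a n d * g n d) - ∑' d, P d * G d|
      ≤ |(∑ d ∈ range D, a n d * g n d) - ∑ d ∈ range D, P d * G d|
        + |∑ d ∈ Ico D (n+1), a n d * g n d|
        + |(∑' d, P d * G d) - ∑ d ∈ range D, P d * G d| := this
    _ < ε' + M * (2 * ε') + M * ε' := by
        have h3 := htailL
        apply add_lt_add_of_lt_of_le
        apply add_lt_add_of_lt_of_le hh htailbound
        exact htailL
    _ ≤ ε := by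
        rw [hε'def]
        rw [div_eq_mul_inv]
        have : ε * (4 * (M+1))⁻¹ * (4 * (M + 1)) = ε := by field_simp
        nlinarith [mul_pos hε (inv_pos.mpr (by linarith : (0:ℝ) < 4 * (M+1)))]

lemma tendsto_binom_poisson (p : ℕ → ℝ) (c : ℝ) (hp : ∀ n, p n ∈ Set.Ioo (0:ℝ) 1)
    (hnp : Tendsto (fun n : ℕ => (n : ℝ) * (1 - p n)) atTop (nhds c)) (d : ℕ) :
    Tendsto (fun n : ℕ => (n.choose d : ℝ) * (2 * p n * (1 - p n))^d * ((p n)^2)^(n - d))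
      atTop (nhds (Real.exp (-(2*c)) * (2*c)^d / ((Nat.factorial d : ℕ) : ℝ))) := by
  have h1p : Tendsto (fun n : ℕ => 1 - p n) atTop (nhds 0) := by
    have : Tendsto (fun n : ℕ => ((n : ℝ) * (1 - p n)) * (n : ℝ)⁻¹) atTop (nhds (c * 0)) :=
      hnp.mul tendsto_inv_atTop_nhds_zero_nat
    rw [mul_zero] at this
    apply this.congr'
    filter_upwards [eventually_gt_atTop 0] with n hn
    field_simp
  have hp1 : Tendsto p atTop (nhds 1) := by
    have := (tendsto_const_nhds (x := (1:ℝ))).sub h1p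
    simpa using this
  -- second factor
  have hterm2 : Tendsto (fun n : ℕ => ((p n)^2)^(n - d)) atTop (nhds (Real.exp (-(2*c)))) := by
    have := tendsto_one_sub_pow_exp (fun n => 1 - (p n)^2) (2*c)
      (Eventually.of_forall fun n => by
        show (0:ℝ) ≤ 1 - p n ^ 2; nlinarith [(hp n).1, (hp n).2])
      (Eventually.of_forall fun n => by
        show 1 - p n ^ 2 < 1; nlinarith [(hp n).1, (hp n).2])
      ?_ d
    · apply this.congr
      intro n
      ring_nf
    · have : Tendsto (fun n : ℕ => ((n : ℝ) * (1 - p n)) * (1 + p n)) atTop (nhds (c * (1+1))) :=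
        hnp.mul (by simpa using (tendsto_const_nhds (x := (1:ℝ))).add hp1)
      apply Tendsto.congr' _ (by convert this using 2; ring)
      apply Eventually.of_forall
      intro n
      ring
  -- first factor
  have hfac : ∀ i : ℕ, Tendsto (fun n : ℕ => ((n : ℝ) - i) * (2 * p n * (1 - p n)))
      atTop (nhds (2 * c)) := by
    intro i
    have hi : Tendsto (fun n : ℕ => (i:ℝ) * (1 - p n)) atTop (nhds 0) := by
      simpa using (tendsto_const_nhds (x := (i:ℝ))).mul h1p
    have h2 : Tendsto (fun n : ℕ => ((n : ℝ) - i) * (1 - p n)) atTop (nhds c) := by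
      have h4 := hnp.sub hi
      rw [sub_zero] at h4
      apply h4.congr
      intro n; ring
    have := ((tendsto_const_nhds (x := (2:ℝ))).mul hp1).mul h2
    have h3 : (2 : ℝ) * 1 * c = 2 * c := by ring
    rw [h3] at this
    apply this.congr
    intro n; ring
  have hterm1 : Tendsto (fun n : ℕ => ∏ i ∈ range d, (((n : ℝ) - i) * (2 * p n * (1 - p n))))
      atTop (nhds ((2*c)^d)) := by
    have := tendsto_finset_prod (range d) (fun i (_ : i ∈ range d) => hfac i)
    simpa [Finset.prod_const, Finset.card_range] using this
  have hmain := (hterm1.mul hterm2).div_const ((Nat.factorial d : ℕ) : ℝ)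
  have hrearr : (2*c)^d * Real.exp (-(2*c)) / ((Nat.factorial d : ℕ) : ℝ)
      = Real.exp (-(2*c)) * (2*c)^d / ((Nat.factorial d : ℕ) : ℝ) := by ring
  rw [hrearr] at hmain
  apply hmain.congr'
  filter_upwards [eventually_ge_atTop d] with n hnd
  have hcast : (n.choose d : ℝ) = (∏ i ∈ range d, ((n : ℝ) - i)) / ((Nat.factorial d : ℕ) : ℝ) := by
    have h1 : (Nat.factorial d : ℕ) * n.choose d = n.descFactorial d :=
      (Nat.descFactorial_eq_factorial_mul_choose n d).symm
    have h2 : ((n.descFactorial d : ℕ) : ℝ) = ∏ i ∈ range d, ((n : ℝ) - i) := by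
      rw [Nat.descFactorial_eq_prod_range]
      push_cast
      apply Finset.prod_congr rfl
      intro i hi
      rw [Finset.mem_range] at hi
      rw [Nat.cast_sub (by omega)]
    have h3 : ((Nat.factorial d : ℕ) : ℝ) * (n.choose d : ℝ) = ∏ i ∈ range d, ((n : ℝ) - i) := by
      rw [← h2, ← h1]; push_cast; ring
    have hd0 : ((Nat.factorial d : ℕ) : ℝ) ≠ 0 := by positivity
    field_simp at h3 ⊢
    linarith [h3]
  rw [hcast, Finset.prod_mul_distrib, Finset.prod_const, Finset.card_range]
  ring

lemma gnp_integral (n : ℕ) (p : ℝ) (hp : p ∈ Set.Ioo (0:ℝ) 1)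
    (F : ({e : Fin n × Fin n // e.1 < e.2} → Bool) → ℝ) :
    ∫ ω, F ω ∂(gnp n (ENNReal.ofReal p) (ENNReal.ofReal_le_one.mpr hp.2.le))
      = ∑ ω : {e : Fin n × Fin n // e.1 < e.2} → Bool,
          (∏ e, (if ω e then p else 1 - p)) * F ω := by
  have hple : ENNReal.ofReal p ≤ 1 := ENNReal.ofReal_le_one.mpr hp.2.le
  have hmeas : ∀ ω : {e : Fin n × Fin n // e.1 < e.2} → Bool,
      (gnp n (ENNReal.ofReal p) hple) {ω} = ∏ e, (if ω e then ENNReal.ofReal p else 1 - ENNReal.ofReal p) := by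
    intro ω
    rw [← Set.univ_pi_singleton ω]
    rw [gnp, Measure.pi_pi]
    apply Finset.prod_congr rfl
    intro e _
    rw [PMF.toMeasure_apply_singleton _ _ (measurableSet_singleton _)]
    refine Eq.trans (PMF.bernoulli_apply _ _) ?_
    cases ω e <;> simp [ENNReal.coe_sub, ENNReal.coe_toNNReal ENNReal.ofReal_ne_top]
  haveI : IsProbabilityMeasure (gnp n (ENNReal.ofReal p) hple) := by
    unfold gnp; infer_instance
  rw [integral_fintype (Integrable.of_finite)]
  apply Finset.sum_congr rfl
  intro ω _
  rw [measureReal_def, hmeas ω, ENNReal.toReal_prod, smul_eq_mul]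
  congr 1
  apply Finset.prod_congr rfl
  intro e _
  cases hwe : ω e
  · simp only [hwe, Bool.false_eq_true, if_false]
    rw [ENNReal.toReal_sub_of_le hple ENNReal.one_ne_top]
    rw [ENNReal.toReal_one, ENNReal.toReal_ofReal hp.1.le]
  · simp only [hwe, if_true]
    exact ENNReal.toReal_ofReal hp.1.le


/-- the sorted edge corresponding to an unordered pair of distinct vertices -/
def emap {m : ℕ} (a b : Fin m) (hab : a ≠ b) : {e : Fin m × Fin m // e.1 < e.2} :=
  if h : a < b then ⟨(a, b), h⟩ else ⟨(b, a), hab.lt_or_gt.resolve_left h⟩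

lemma emap_lt {m : ℕ} (a b : Fin m) (hab : a ≠ b) :
    (emap a b hab).1 = (a, b) ∨ (emap a b hab).1 = (b, a) := by
  unfold emap; split <;> simp

lemma eInd_emap {m : ℕ} (ω : {e : Fin m × Fin m // e.1 < e.2} → Bool) (a b : Fin m)
    (hab : a ≠ b) : eInd ω a b = if ω (emap a b hab) then 1 else 0 := by
  unfold eInd emap
  rcases lt_trichotomy a b with h | h | h
  · rw [dif_pos h, dif_pos h]
  · exact absurd h hab
  · rw [dif_neg (not_lt_of_gt h), dif_pos h, dif_neg (not_lt_of_gt h)]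

lemma key_formula (m : ℕ) (p : ℝ) (hp : p ∈ Set.Ioo (0:ℝ) 1) (i' j' : Fin m) (hij : i' ≠ j')
    (F : ℕ → ℕ → ℝ) :
    ∫ ω, F (Sij i' j' ω) (Tij i' j' ω)
        ∂(gnp m (ENNReal.ofReal p) (ENNReal.ofReal_le_one.mpr hp.2.le))
      = ∑ u : {k : Fin m // k ≠ i' ∧ k ≠ j'} → Bool × Bool,
          (∏ k, ((if (u k).1 then p else 1 - p) * (if (u k).2 then p else 1 - p)))
            * F (univ.filter fun k => u k = (true, true)).card
                (univ.filter fun k => u k ≠ (false, false)).card := by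
  classical
  set K := {k : Fin m // k ≠ i' ∧ k ≠ j'} with hK
  -- the relevant-coordinates injection
  have hne1 : ∀ k : K, i' ≠ (k : Fin m) := fun k => fun hh => k.2.1 hh.symm
  have hne2 : ∀ k : K, j' ≠ (k : Fin m) := fun k => fun hh => k.2.2 hh.symm
  set ψ : K × Bool → {e : Fin m × Fin m // e.1 < e.2} :=
    fun kb => if kb.2 then emap i' kb.1 (hne1 kb.1) else emap j' kb.1 (hne2 kb.1) with hψdef
  have hψ : Function.Injective ψ := by
    rintro ⟨k, b⟩ ⟨k', b'⟩ hkk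
    have hset : ∀ (a c : Fin m) (h1 : a ≠ c) (a' c' : Fin m) (h2 : a' ≠ c'),
        emap a c h1 = emap a' c' h2 → (a = a' ∧ c = c') ∨ (a = c' ∧ c = a') := by
      intro a c h1 a' c' h2 heq
      have := congrArg Subtype.val heq
      unfold emap at this
      split_ifs at this <;>
        simp only [Prod.mk.injEq] at this <;> omega
    simp only [hψdef] at hkk
    cases b <;> cases b' <;> simp only [if_true, if_false, Bool.false_eq_true] at hkk
    · obtain h | h := hset _ _ _ _ _ _ hkk
      · exact Prod.ext (Subtype.ext h.2) rfl
      · exact absurd h.1.symm (k'.2.2)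
    · obtain h | h := hset _ _ _ _ _ _ hkk
      · exact absurd h.1 hij.symm
      · exact absurd h.1.symm (k'.2.2)
    · obtain h | h := hset _ _ _ _ _ _ hkk
      · exact absurd h.1 hij
      · exact absurd h.1.symm (k'.2.1)
    · obtain h | h := hset _ _ _ _ _ _ hkk
      · exact Prod.ext (Subtype.ext h.2) rfl
      · exact absurd h.1.symm (k'.2.1)
  -- counting bridges
  have hS : ∀ ω, Sij i' j' ω
      = (univ.filter fun k : K => (ω (ψ (k, true)) && ω (ψ (k, false))) = true).card := by
    intro ω
    rw [Sij, Finset.sum_subtype (univ \ {i', j'})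
      (p := fun k => k ≠ i' ∧ k ≠ j') (fun k => by simp [not_or]), Finset.card_filter]
    apply Finset.sum_congr rfl
    intro k _
    rw [eInd_emap ω i' k (hne1 k), eInd_emap ω j' k (hne2 k)]
    have e1 : ψ (k, true) = emap i' k (hne1 k) := by simp [hψdef]
    have e2 : ψ (k, false) = emap j' k (hne2 k) := by simp [hψdef]
    rw [e1, e2]
    cases ω (emap i' ↑k (hne1 k)) <;> cases ω (emap j' ↑k (hne2 k)) <;> simp
  have hT : ∀ ω, Tij i' j' ω
      = (univ.filter fun k : K => (ω (ψ (k, true)) || ω (ψ (k, false))) = true).card := by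
    intro ω
    rw [Tij, Finset.sum_subtype (univ \ {i', j'})
      (p := fun k => k ≠ i' ∧ k ≠ j') (fun k => by simp [not_or]), Finset.card_filter]
    apply Finset.sum_congr rfl
    intro k _
    rw [eInd_emap ω i' k (hne1 k), eInd_emap ω j' k (hne2 k)]
    have e1 : ψ (k, true) = emap i' k (hne1 k) := by simp [hψdef]
    have e2 : ψ (k, false) = emap j' k (hne2 k) := by simp [hψdef]
    rw [e1, e2]
    cases ω (emap i' ↑k (hne1 k)) <;> cases ω (emap j' ↑k (hne2 k)) <;> simp
  rw [gnp_integral m p hp]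
  have hcong : ∀ ω : {e : Fin m × Fin m // e.1 < e.2} → Bool,
      (∏ e, (if ω e then p else 1 - p)) * F (Sij i' j' ω) (Tij i' j' ω)
        = (∏ e, (if ω e then p else 1 - p)) *
          (fun v : K × Bool → Bool =>
            F (univ.filter fun k : K => (v (k, true) && v (k, false)) = true).card
              (univ.filter fun k : K => (v (k, true) || v (k, false)) = true).card)
          (fun kb => ω (ψ kb)) := by
    intro ω
    rw [hS ω, hT ω]
  rw [Finset.sum_congr rfl (fun ω _ => hcong ω)]
  rw [sum_marginal ψ hψ (fun b => if b then p else 1 - p) (by norm_num)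
    (fun v : K × Bool → Bool =>
      F (univ.filter fun k : K => (v (k, true) && v (k, false)) = true).card
        (univ.filter fun k : K => (v (k, true) || v (k, false)) = true).card)]
  -- now curry
  set e : (K → Bool × Bool) ≃ (K × Bool → Bool) :=
    { toFun := fun u kb => if kb.2 then (u kb.1).1 else (u kb.1).2
      invFun := fun v k => (v (k, true), v (k, false))
      left_inv := fun u => by funext k; simp
      right_inv := fun v => by
        funext kb
        rcases kb with ⟨k, b⟩
        cases b <;> simp } with hedef
  rw [← Equiv.sum_comp e (fun v : K × Bool → Bool => (∏ kb, (if v kb then p else 1 - p)) *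
      F (univ.filter fun k : K => (v (k, true) && v (k, false)) = true).card
        (univ.filter fun k : K => (v (k, true) || v (k, false)) = true).card)]
  apply Finset.sum_congr rfl
  intro u _
  have happ : ∀ k b, e u (k, b) = if b then (u k).1 else (u k).2 := fun k b => rfl
  congr 1
  · rw [Fintype.prod_prod_type]
    apply Finset.prod_congr rfl
    intro k _
    rw [Fintype.prod_bool]
    rw [happ, happ]
    simp
  · have h1 : (univ.filter fun k : K => ((e u) (k, true) && (e u) (k, false)) = true)
        = univ.filter fun k : K => u k = (true, true) := by
      apply Finset.filter_congr
      intro k _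
      rw [happ, happ]
      simp only [if_true, if_false]
      rcases hu : u k with ⟨x, y⟩
      cases x <;> cases y <;> simp
    have h2 : (univ.filter fun k : K => ((e u) (k, true) || (e u) (k, false)) = true)
        = univ.filter fun k : K => u k ≠ (false, false) := by
      apply Finset.filter_congr
      intro k _
      rw [happ, happ]
      simp only [if_true, if_false]
      rcases hu : u k with ⟨x, y⟩
      cases x <;> cases y <;> simp
    rw [h1, h2]


lemma formula_eval (K : Type) [Fintype K] [DecidableEq K] (p : ℝ) (hp : p ∈ Set.Ioo (0:ℝ) 1)
    (F : ℕ → ℕ → ℝ) (M : ℝ) (hM : ∀ s t, |F s t| ≤ M) :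
    ∃ B : ℝ, |B| ≤ M * (1 - (p * (2 - p)) ^ Fintype.card K) ∧
    ∑ u : K → Bool × Bool,
        (∏ k, ((if (u k).1 then p else 1 - p) * (if (u k).2 then p else 1 - p)))
          * F (univ.filter fun k => u k = (true, true)).card
              (univ.filter fun k => u k ≠ (false, false)).card
      = (∑ d ∈ range (Fintype.card K + 1),
          ((Fintype.card K).choose d : ℝ) * (2*p*(1-p))^d * (p^2)^(Fintype.card K - d)
            * F (Fintype.card K - d) (Fintype.card K)) + B := by
  classical
  obtain ⟨hp0, hp1⟩ := hp
  set n := Fintype.card K with hn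
  set q : Bool × Bool → ℝ := fun a => (if a.1 then p else 1 - p) * (if a.2 then p else 1 - p)
    with hq
  have hq0 : ∀ a, 0 ≤ q a := by
    rintro ⟨x, y⟩
    cases x <;> cases y <;> simp [hq] <;> nlinarith
  have hqsum : ∑ a, q a = 1 := by
    rw [Fintype.sum_prod_type]
    simp [hq, Fintype.sum_bool]
    ring
  set Pz : (K → Bool × Bool) → Prop := fun u => ∀ k, u k ≠ (false, false) with hPz
  set Q : (K → Bool × Bool) → ℝ := fun u => ∏ k, q (u k) with hQ
  have hQ0 : ∀ u, 0 ≤ Q u := fun u => Finset.prod_nonneg (fun k _ => hq0 _)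
  set G : (K → Bool × Bool) → ℝ := fun u =>
    Q u * F (univ.filter fun k => u k = (true, true)).card
            (univ.filter fun k => u k ≠ (false, false)).card with hG
  -- total mass
  have htot : ∑ u : K → Bool × Bool, Q u = 1 := by
    rw [hQ, sum_prod_eq_pow, hqsum, one_pow]
  -- mass of the z = 0 part
  have hsub : ∑ a ∈ univ.filter (fun a : Bool × Bool => a ≠ (false, false)), q a
      = p * (2 - p) := by
    rw [Finset.filter_ne', Finset.sum_erase_eq_sub (mem_univ _), hqsum]
    simp [hq]
    ring
  have hz0 : ∑ u ∈ univ.filter Pz, Q u = (p * (2 - p)) ^ n := by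
    rw [Finset.sum_filter]
    rw [show (fun u : K → Bool × Bool => if Pz u then Q u else 0)
      = fun u => if ∀ k, u k ≠ (false, false) then Q u else 0 from rfl]
    rw [sum_restrict (fun a : Bool × Bool => a ≠ (false, false)) Q]
    have : ∀ u : K → {a : Bool × Bool // a ≠ (false, false)},
        Q (fun k => (u k : Bool × Bool)) = ∏ k, q (u k : Bool × Bool) := fun u => rfl
    rw [Finset.sum_congr rfl (fun u _ => this u),
      sum_prod_eq_pow (fun a' : {a : Bool × Bool // a ≠ (false, false)} => q ↑a')]
    rw [show (∑ a' : {a : Bool × Bool // a ≠ (false, false)}, q ↑a') = p * (2 - p) from by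
      rw [← hsub]; exact (Finset.sum_subtype _ (by simp) q).symm]
  -- per-d mass
  have had : ∀ d : ℕ,
      ∑ u ∈ univ.filter (fun u => Pz u ∧ (univ.filter fun k => ((u k).1 ≠ (u k).2)).card = d), Q u
        = (n.choose d : ℝ) * (2*p*(1-p))^d * (p^2)^(n - d) := by
    intro d
    rw [Finset.sum_filter]
    have hsplitif : ∀ u : K → Bool × Bool,
        (if Pz u ∧ (univ.filter fun k => ((u k).1 ≠ (u k).2)).card = d then Q u else 0)
        = if ∀ k, u k ≠ (false, false) then
            (if (univ.filter fun k => ((u k).1 ≠ (u k).2)).card = d then Q u else 0) else 0 := by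
      intro u
      rw [ite_and]
    rw [Finset.sum_congr rfl (fun u _ => hsplitif u)]
    rw [sum_restrict (fun a : Bool × Bool => a ≠ (false, false))
      (fun u => if (univ.filter fun k => ((u k).1 ≠ (u k).2)).card = d then Q u else 0)]
    have hbin := sum_count_eq_binom (A := {a : Bool × Bool // a ≠ (false, false)}) (K := K)
      (fun a' => q ↑a') (fun a' => (a' : Bool × Bool).1 ≠ (a' : Bool × Bool).2) d
    rw [show (∑ u : K → {a : Bool × Bool // a ≠ (false, false)},
        if (univ.filter fun k => ((fun k => ((u k : Bool × Bool))) k).1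
            ≠ ((fun k => ((u k : Bool × Bool))) k).2).card = d
          then Q (fun k => (u k : Bool × Bool)) else 0)
      = ∑ u : K → {a : Bool × Bool // a ≠ (false, false)},
        (if (univ.filter fun k => (u k : Bool × Bool).1 ≠ (u k : Bool × Bool).2).card = d
          then ∏ k, q ↑(u k) else 0) from rfl]
    rw [hbin]
    have hWd : (∑ a' ∈ univ.filter
        (fun a' : {a : Bool × Bool // a ≠ (false, false)} =>
          (a' : Bool × Bool).1 ≠ (a' : Bool × Bool).2), q ↑a') = 2*p*(1-p) := by
      rw [Finset.sum_filter]
      rw [← Finset.sum_subtype (univ.filter (fun a : Bool × Bool => a ≠ (false, false)))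
        (by simp) (fun a : Bool × Bool => if a.1 ≠ a.2 then q a else 0)]
      rw [Finset.sum_filter_of_ne (p := fun a : Bool × Bool => a ≠ (false, false))
        (f := fun a : Bool × Bool => if a.1 ≠ a.2 then q a else 0)
        (fun a _ hne => by intro heq; exact hne (by rw [heq]; simp))]
      rw [Fintype.sum_prod_type]
      simp [Fintype.sum_bool, hq]
      ring
    have hWs : (∑ a' ∈ univ.filter
        (fun a' : {a : Bool × Bool // a ≠ (false, false)} =>
          ¬ ((a' : Bool × Bool).1 ≠ (a' : Bool × Bool).2)), q ↑a') = p^2 := by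
      rw [Finset.sum_filter]
      rw [← Finset.sum_subtype (univ.filter (fun a : Bool × Bool => a ≠ (false, false)))
        (by simp) (fun a : Bool × Bool => if ¬ (a.1 ≠ a.2) then q a else 0)]
      rw [Finset.sum_filter]
      rw [Fintype.sum_prod_type]
      simp [Fintype.sum_bool, hq]
      ring
    rw [hWd, hWs, hn]
  -- assembly
  refine ⟨∑ u ∈ univ.filter (fun u => ¬ Pz u), G u, ?_, ?_⟩
  · have hsplitQ := Finset.sum_filter_add_sum_filter_not univ Pz Q
    rw [htot, hz0] at hsplitQ
    have hnotz : ∑ u ∈ univ.filter (fun u => ¬ Pz u), Q u = 1 - (p * (2 - p)) ^ n := by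
      linarith
    calc |∑ u ∈ univ.filter (fun u => ¬ Pz u), G u|
        ≤ ∑ u ∈ univ.filter (fun u => ¬ Pz u), |G u| := Finset.abs_sum_le_sum_abs _ _
      _ ≤ ∑ u ∈ univ.filter (fun u => ¬ Pz u), Q u * M := by
          apply Finset.sum_le_sum
          intro u _
          show |Q u * F (univ.filter fun k => u k = (true, true)).card
              (univ.filter fun k => u k ≠ (false, false)).card| ≤ Q u * M
          rw [abs_mul, abs_of_nonneg (hQ0 u)]
          exact mul_le_mul_of_nonneg_left (hM _ _) (hQ0 u)
      _ = (∑ u ∈ univ.filter (fun u => ¬ Pz u), Q u) * M := by rw [Finset.sum_mul]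
      _ = (1 - (p * (2 - p)) ^ n) * M := by rw [hnotz]
      _ = M * (1 - (p * (2 - p)) ^ n) := mul_comm _ _
  · rw [← Finset.sum_filter_add_sum_filter_not univ Pz G]
    congr 1
    rw [← Finset.sum_fiberwise_of_maps_to
      (g := fun u : K → Bool × Bool => (univ.filter fun k => ((u k).1 ≠ (u k).2)).card)
      (t := range (n+1))
      (fun u _ => by
        rw [Finset.mem_range]
        exact Nat.lt_succ_of_le (le_trans (Finset.card_filter_le _ _) (le_of_eq Finset.card_univ)))]
    apply Finset.sum_congr rfl
    intro d hd
    rw [Finset.filter_filter]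
    have hval : ∀ u ∈ univ.filter (fun u : K → Bool × Bool =>
        Pz u ∧ (univ.filter fun k => ((u k).1 ≠ (u k).2)).card = d),
        G u = Q u * F (n - d) n := by
      intro u hu
      rw [Finset.mem_filter] at hu
      obtain ⟨-, hu1, hu2⟩ := hu
      have hTval : (univ.filter fun k : K => u k ≠ (false, false)) = univ :=
        Finset.filter_true_of_mem (fun k _ => hu1 k)
      have hfneg : (univ.filter fun k : K => ¬ ((u k).1 ≠ (u k).2))
          = univ.filter fun k : K => u k = (true, true) := by
        apply Finset.filter_congr
        intro k _
        have := hu1 k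
        rcases hu' : u k with ⟨x, y⟩
        rw [hu'] at this
        cases x <;> cases y <;> simp_all
      have hpart := Finset.card_filter_add_card_filter_not
        (s := (univ : Finset K)) (p := fun k => (u k).1 ≠ (u k).2)
      rw [hu2, hfneg] at hpart
      simp only [Finset.card_univ] at hpart
      have hSval : (univ.filter fun k : K => u k = (true, true)).card = n - d := by omega
      show Q u * F (univ.filter fun k => u k = (true, true)).card
          (univ.filter fun k => u k ≠ (false, false)).card = Q u * F (n - d) n
      rw [hSval, hTval, Finset.card_univ]
    rw [Finset.sum_congr rfl hval, ← Finset.sum_mul, had d]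


end helpers

lemma card_others (m : ℕ) (i' j' : Fin m) (hij : i' ≠ j') :
    Fintype.card {k : Fin m // k ≠ i' ∧ k ≠ j'} = m - 2 := by
  classical
  rw [Fintype.card_subtype]
  have : Finset.univ.filter (fun k : Fin m => k ≠ i' ∧ k ≠ j')
      = Finset.univ \ {i', j'} := by
    ext k
    simp [not_or]
  rw [this, Finset.card_sdiff_of_subset (by simp)]
  rw [Finset.card_univ, Fintype.card_fin]
  congr 1
  rw [Finset.card_insert_of_notMem (by simp [hij]), Finset.card_singleton]

/-- If `n(1-p) → c > 0`, then `n(1 − J_ij)` converges in distribution to a Poisson random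
variable with parameter `2c` (convergence in distribution stated via bounded continuous
test functions). -/
theorem jaccard_dense_poisson_limit (p : ℕ → ℝ) (hp : ∀ n, p n ∈ Set.Ioo (0 : ℝ) 1)
    (c : ℝ) (hc : 0 < c)
    (h : Tendsto (fun n : ℕ => ((n : ℝ) + 2) * (1 - p n)) atTop (nhds c))
    (i j : ℕ) (hij : i ≠ j) :
    ∀ f : BoundedContinuousFunction ℝ ℝ,
      Tendsto (fun n : ℕ =>
          ∫ ω, f (((n : ℝ) + 2) *
              (1 - jac (p n) (i : Fin (n + 2)) (j : Fin (n + 2)) ω))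
            ∂(gnp (n + 2) (ENNReal.ofReal (p n)) (ENNReal.ofReal_le_one.mpr (hp n).2.le)))
        atTop
        (nhds (∑' k : ℕ, Real.exp (-(2 * c)) * (2 * c) ^ k / (Nat.factorial k) * f k)) := by
  classical
  intro f
  set M : ℝ := ‖f‖ with hM
  have hfM : ∀ x : ℝ, |f x| ≤ M := fun x => by
    have := f.norm_coe_le_norm x
    simpa [Real.norm_eq_abs] using this
  -- basic limits
  have h1p : Tendsto (fun n : ℕ => 1 - p n) atTop (nhds 0) := by
    have h2 : Tendsto (fun n : ℕ => (((n:ℝ) + 2) * (1 - p n)) * ((n:ℝ) + 2)⁻¹)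
        atTop (nhds (c * 0)) := by
      apply h.mul
      have : Tendsto (fun n : ℕ => (n:ℝ) + 2) atTop atTop :=
        tendsto_atTop_add_const_right atTop 2 tendsto_natCast_atTop_atTop
      exact this.inv_tendsto_atTop
    rw [mul_zero] at h2
    apply h2.congr
    intro n
    field_simp
  have hnp : Tendsto (fun n : ℕ => (n : ℝ) * (1 - p n)) atTop (nhds c) := by
    have h2 := h.sub ((tendsto_const_nhds (x := (2:ℝ))).mul h1p)
    rw [mul_zero, sub_zero] at h2
    apply h2.congr
    intro n
    ring
  -- the coefficient sequences
  set A : ℕ → ℕ → ℝ := fun n d =>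
    (n.choose d : ℝ) * (2 * p n * (1 - p n))^d * ((p n)^2)^(n - d) with hA
  set Pd : ℕ → ℝ := fun d => Real.exp (-(2*c)) * (2*c)^d / (Nat.factorial d : ℝ) with hPd
  set g : ℕ → ℕ → ℝ := fun n d =>
    f (((n:ℝ) + 2) * (1 - (if (n:ℕ) = 0 then p n / (2 - p n)
      else (((n - d : ℕ)) : ℝ) / ((n : ℕ) : ℝ)))) with hg
  -- Scheffé hypotheses
  have hq12 : ∀ n, 0 ≤ p n * (2 - p n) ∧ p n * (2 - p n) ≤ 1 := by
    intro n
    obtain ⟨h0, h1⟩ := hp n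
    constructor <;> nlinarith
  have ha0 : ∀ n d, 0 ≤ A n d := by
    intro n d
    obtain ⟨h0, h1⟩ := hp n
    have : (0:ℝ) ≤ 2 * p n * (1 - p n) := by nlinarith
    positivity
  have hasum : ∀ n, ∑ d ∈ Finset.range (n+1), A n d ≤ 1 := by
    intro n
    have hb := add_pow (2 * p n * (1 - p n)) ((p n)^2) n
    have : ∑ d ∈ Finset.range (n+1), A n d = (2 * p n * (1 - p n) + (p n)^2)^n := by
      rw [hb]
      apply Finset.sum_congr rfl
      intro d _
      rw [hA]
      ring
    rw [this]
    have h2 : 2 * p n * (1 - p n) + (p n)^2 = p n * (2 - p n) := by ring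
    rw [h2]
    exact pow_le_one₀ (hq12 n).1 (hq12 n).2
  have haP : ∀ d, Tendsto (fun n => A n d) atTop (nhds (Pd d)) := fun d =>
    tendsto_binom_poisson p c hp hnp d
  have hPs : Summable Pd := by
    have h2 := (Real.summable_pow_div_factorial (2*c)).mul_left (Real.exp (-(2*c)))
    apply h2.congr
    intro d
    rw [hPd]
    ring
  have hP1 : ∑' d, Pd d = 1 := by
    have h2 : ∀ d, Pd d = Real.exp (-(2*c)) * ((2*c)^d / (Nat.factorial d : ℝ)) := by
      intro d; rw [hPd]; ring
    rw [tsum_congr h2, tsum_mul_left]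
    have h3 : ∑' d : ℕ, (2*c)^d / (Nat.factorial d : ℝ) = Real.exp (2*c) := by
      rw [Real.exp_eq_exp_ℝ, NormedSpace.exp_eq_tsum_div]
    rw [h3, Real.exp_neg]
    rw [inv_mul_cancel₀ (Real.exp_ne_zero _)]
  have hgM : ∀ n d, |g n d| ≤ M := fun n d => hfM _
  have hGM : ∀ d : ℕ, |f (d : ℝ)| ≤ M := fun d => hfM _
  have hgG : ∀ d : ℕ, Tendsto (fun n => g n d) atTop (nhds (f (d : ℝ))) := by
    intro d
    have harg : Tendsto (fun n : ℕ => ((n:ℝ) + 2) * (1 - (((n - d : ℕ)) : ℝ) / ((n : ℕ) : ℝ)))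
        atTop (nhds d) := by
      have h2 : Tendsto (fun n : ℕ => (d:ℝ) * (1 + 2 * ((n:ℝ))⁻¹)) atTop
          (nhds ((d:ℝ) * (1 + 2 * 0))) := by
        apply Tendsto.mul tendsto_const_nhds
        apply Tendsto.add tendsto_const_nhds
        exact (tendsto_const_nhds (x := (2:ℝ))).mul tendsto_inv_atTop_nhds_zero_nat
      rw [show (d:ℝ) * (1 + 2 * 0) = (d:ℝ) by ring] at h2
      apply h2.congr'
      filter_upwards [eventually_ge_atTop (max d 1)] with n hn
      have hd : d ≤ n := le_trans (le_max_left _ _) hn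
      have h1 : 1 ≤ n := le_trans (le_max_right _ _) hn
      have hn0 : ((n:ℕ):ℝ) ≠ 0 := by positivity
      rw [Nat.cast_sub hd]
      field_simp
      ring
    have hcont := (map_continuous f).tendsto (d : ℝ)
    have h3 := hcont.comp harg
    apply h3.congr'
    filter_upwards [eventually_ge_atTop 1] with n hn
    rw [hg]
    simp only [Function.comp]
    congr 1
    rw [if_neg (by omega)]
  -- Scheffé main part
  have hScheffe := scheffe A Pd g (fun d => f (d:ℝ)) M ha0 hasum haP hPs hP1 hgM hGM hgG
  -- identify the limit
  have hlim : (∑' d, Pd d * f (d:ℝ))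
      = ∑' k : ℕ, Real.exp (-(2 * c)) * (2 * c) ^ k / (Nat.factorial k) * f k := by
    apply tsum_congr
    intro k
    rw [hPd]
  rw [hlim] at hScheffe
  -- the remainder
  set Int : ℕ → ℝ := fun n =>
    ∫ ω, f (((n : ℝ) + 2) *
        (1 - jac (p n) (i : Fin (n + 2)) (j : Fin (n + 2)) ω))
      ∂(gnp (n + 2) (ENNReal.ofReal (p n)) (ENNReal.ofReal_le_one.mpr (hp n).2.le)) with hInt
  set SA : ℕ → ℝ := fun n => ∑ d ∈ Finset.range (n+1), A n d * g n d with hSA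
  set B : ℕ → ℝ := fun n => Int n - SA n with hB
  -- eventual bound on B
  have hBbound : ∀ᶠ n in atTop, |B n| ≤ M * (1 - (p n * (2 - p n)) ^ n) := by
    filter_upwards [eventually_ge_atTop (max i j + 1)] with n hn
    have hi : i < n + 2 := by omega
    have hj : j < n + 2 := by omega
    have hijne : (i : Fin (n + 2)) ≠ (j : Fin (n + 2)) := by
      intro hh
      apply hij
      have h1 : ((i : Fin (n+2)) : ℕ) = i := by
        simp [Fin.val_natCast, Nat.mod_eq_of_lt hi]
      have h2 : ((j : Fin (n+2)) : ℕ) = j := by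
        simp [Fin.val_natCast, Nat.mod_eq_of_lt hj]
      rw [← h1, ← h2, hh]
    set F : ℕ → ℕ → ℝ := fun s t =>
      f (((n:ℝ) + 2) * (1 - (if t = 0 then p n / (2 - p n) else (s : ℝ) / (t : ℝ)))) with hF
    have hkey := key_formula (n+2) (p n) (hp n) (i : Fin (n+2)) (j : Fin (n+2)) hijne F
    have hInteq : Int n = ∫ ω, F (Sij (i : Fin (n+2)) (j : Fin (n+2)) ω)
        (Tij (i : Fin (n+2)) (j : Fin (n+2)) ω)
        ∂(gnp (n + 2) (ENNReal.ofReal (p n)) (ENNReal.ofReal_le_one.mpr (hp n).2.le)) := rfl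
    obtain ⟨B', hB'le, hB'eq⟩ := formula_eval {k : Fin (n+2) // k ≠ (i : Fin (n+2)) ∧ k ≠ (j : Fin (n+2))}
      (p n) (hp n) F M (fun s t => hfM _)
    have hcard := card_others (n+2) (i : Fin (n+2)) (j : Fin (n+2)) hijne
    rw [hcard] at hB'le hB'eq
    have hn2 : n + 2 - 2 = n := by omega
    rw [hn2] at hB'le hB'eq
    have hBeq : Int n = SA n + B' := by
      rw [hInteq, hkey, hB'eq]
    have : B n = B' := by simp only [hB]; rw [hBeq]; ring
    rw [this]
    exact hB'le
  -- B tends to zero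
  have hpow1 : Tendsto (fun n : ℕ => (p n * (2 - p n)) ^ n) atTop (nhds 1) := by
    have h2 := tendsto_one_sub_pow_exp (fun n => (1 - p n)^2) 0
      (Eventually.of_forall fun n => by positivity)
      (Eventually.of_forall fun n => by
        show (1 - p n)^2 < 1; nlinarith [(hp n).1, (hp n).2])
      (by
        have h3 : Tendsto (fun n : ℕ => ((n:ℝ) * (1 - p n)) * (1 - p n)) atTop
            (nhds (c * 0)) := hnp.mul h1p
        rw [mul_zero] at h3
        apply h3.congr
        intro n
        ring) 0
    rw [neg_zero, Real.exp_zero] at h2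
    apply h2.congr
    intro n
    rw [Nat.sub_zero]
    congr 1
    ring
  have hBzero : Tendsto B atTop (nhds 0) := by
    apply squeeze_zero_norm' _ (by
      have h2 := (tendsto_const_nhds (x := M)).mul
        ((tendsto_const_nhds (x := (1:ℝ))).sub hpow1)
      rw [sub_self, mul_zero] at h2
      exact h2)
    filter_upwards [hBbound] with n hn
    simpa [Real.norm_eq_abs] using hn
  -- combine
  have hfinal := hScheffe.add hBzero
  rw [add_zero] at hfinal
  apply hfinal.congr
  intro n
  simp only [hB]
  ring
end
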